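/- arXiv:2311.11924 — 4 statements merged into one kernel-verified Lean document; each statement's English description precedes it below -/
import Mathlib

section
/- Let Z be a standard Gaussian, h ∈ ℝ, β ∈ ℝ, and define φ(x) = E[tanh²(h + β√x Z)] for x ≥ 0. If h ≠ 0, then φ has a unique fixed point q > 0 on [0,∞), and φ(x) > x for x ∈ [0,q) while φ(x) < x for x > q. -/
open MeasureTheory ProbabilityTheory
open MeasureTheory ProbabilityTheory Real
open scoped ENNReal NNReal

lemma tanh_hasDerivAt (x : ℝ) : HasDerivAt Real.tanh (1 / Real.cosh x ^ 2) x := by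
  have h := (Real.hasDerivAt_sinh x).div (Real.hasDerivAt_cosh x) (Real.cosh_pos x).ne'
  have : Real.tanh = fun y => Real.sinh y / Real.cosh y := by
    funext y; exact Real.tanh_eq_sinh_div_cosh y
  rw [this]
  refine h.congr_deriv ?_
  have := Real.cosh_sq_sub_sinh_sq x
  rw [div_left_inj' (by positivity)]
  nlinarith [this]

lemma tanh_sq_lt_one (x : ℝ) : Real.tanh x ^ 2 < 1 := by
  have h1 := Real.cosh_pos x
  have h2 := Real.cosh_sq_sub_sinh_sq x
  rw [Real.tanh_eq_sinh_div_cosh]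
  rw [div_pow, div_lt_one (by positivity)]
  nlinarith

lemma tanh_ne_zero_of_ne_zero {x : ℝ} (hx : x ≠ 0) : Real.tanh x ≠ 0 := by
  rw [Real.tanh_eq_sinh_div_cosh]
  have hc := Real.cosh_pos x
  rcases hx.lt_or_gt with h | h
  · have hs : Real.sinh x < 0 := by
      have := Real.sinh_lt_sinh.mpr h
      simpa using this
    exact ne_of_lt (div_neg_of_neg_of_pos hs hc)
  · have hs : 0 < Real.sinh x := by
      have := Real.sinh_lt_sinh.mpr h
      simpa using this
    exact ne_of_gt (div_pos hs hc)

lemma key_sinh (u : ℝ) : u * Real.sinh u ≤ Real.sinh u ^ 2 * Real.cosh u := by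
  have hc := Real.one_le_cosh u
  rcases lt_trichotomy u 0 with h | h | h
  · have h1 : Real.sinh u < u := by
      have := Real.self_lt_sinh_iff.mpr (neg_pos.mpr h)
      have h2 : Real.sinh (-u) = -Real.sinh u := Real.sinh_neg u
      nlinarith
    nlinarith
  · simp [h]
  · have h1 : u < Real.sinh u := Real.self_lt_sinh_iff.mpr h
    nlinarith

-- pointwise: u * k u ≤ tanh u ^ 2, where k u = tanh u / cosh u ^ 2
lemma uk_le (u : ℝ) : u * (Real.tanh u / Real.cosh u ^ 2) ≤ Real.tanh u ^ 2 := by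
  have hc := Real.cosh_pos u
  have key := key_sinh u
  rw [Real.tanh_eq_sinh_div_cosh, div_pow, div_div, ← mul_div_assoc]
  rw [div_le_div_iff₀ (by positivity) (by positivity)]
  nlinarith [sq_nonneg (Real.cosh u), hc]

lemma uk_nonneg (u : ℝ) : 0 ≤ u * (Real.tanh u / Real.cosh u ^ 2) := by
  have hc := Real.cosh_pos u
  rw [Real.tanh_eq_sinh_div_cosh, div_div]
  have h1 : 0 ≤ u * Real.sinh u := by
    rcases le_or_gt 0 u with h | h
    · have : 0 ≤ Real.sinh u := by simpa using Real.sinh_le_sinh.mpr h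
      positivity
    · have hs : Real.sinh u ≤ 0 := by simpa using Real.sinh_le_sinh.mpr h.le
      nlinarith
  rw [← mul_div_assoc]
  positivity

lemma abs_k_le_one (u : ℝ) : |Real.tanh u / Real.cosh u ^ 2| ≤ 1 := by
  have hc := Real.one_le_cosh u
  have ht : |Real.tanh u| ≤ 1 := by
    have := _root_.tanh_sq_lt_one u
    nlinarith [abs_nonneg (Real.tanh u), sq_abs (Real.tanh u)]
  rw [abs_div]
  have : (1:ℝ) ≤ |Real.cosh u ^ 2| := by
    rw [abs_of_pos (by positivity : (0:ℝ) < Real.cosh u ^ 2)]; nlinarith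
  have h2 : |Real.tanh u| / |Real.cosh u ^ 2| ≤ |Real.tanh u| := by
    apply div_le_self (abs_nonneg _) this
  linarith



lemma continuous_tanh : Continuous Real.tanh := by
  have : Real.tanh = fun y => Real.sinh y / Real.cosh y := by
    funext y; exact Real.tanh_eq_sinh_div_cosh y
  rw [this]
  exact Real.continuous_sinh.div Real.continuous_cosh fun x => (Real.cosh_pos x).ne'

/-- `φ(x) = E[tanh²(h + β √x Z)]`, `Z` a standard Gaussian. -/
noncomputable def phi (h β x : ℝ) : ℝ :=
  ∫ z, Real.tanh (h + β * Real.sqrt x * z) ^ 2 ∂(gaussianReal 0 1)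

lemma integrable_of_bounded {g : ℝ → ℝ} (hg : Continuous g) (C : ℝ)
    (hC : ∀ z, |g z| ≤ C) : Integrable g (gaussianReal 0 1) := by
  refine Integrable.mono' (integrable_const C) hg.aestronglyMeasurable ?_
  filter_upwards with z using by simpa using hC z

lemma phi_continuous (h β : ℝ) : Continuous (phi h β) := by
  apply continuous_of_dominated (bound := fun _ => 1)
  · intro x
    exact ((continuous_tanh.comp (by continuity)).pow 2).aestronglyMeasurable
  · intro x
    filter_upwards with z
    have := _root_.tanh_sq_lt_one (h + β * Real.sqrt x * z)
    rw [Real.norm_eq_abs, abs_of_nonneg (sq_nonneg _)]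
    exact this.le
  · exact integrable_const 1
  · filter_upwards with z
    have hc : Continuous fun x : ℝ => h + β * Real.sqrt x * z := by
      have := Real.continuous_sqrt
      continuity
    exact (continuous_tanh.comp hc).pow 2

lemma phi_zero (h β : ℝ) : phi h β 0 = Real.tanh h ^ 2 := by
  simp [phi]

lemma integrable_integrand (h b : ℝ) :
    Integrable (fun z => Real.tanh (h + b * z) ^ 2) (gaussianReal 0 1) :=
  integrable_of_bounded ((continuous_tanh.comp (by continuity)).pow 2) 1 (fun z => by
    have := _root_.tanh_sq_lt_one (h + b * z)
    rw [abs_of_nonneg (sq_nonneg _)]; exact this.le)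

lemma phi_lt_one (h β x : ℝ) : phi h β x < 1 := by
  have hint := integrable_integrand h (β * Real.sqrt x)
  have key : 0 < ∫ z, (1 - Real.tanh (h + β * Real.sqrt x * z) ^ 2) ∂(gaussianReal 0 1) := by
    rw [integral_pos_iff_support_of_nonneg]
    · have : Function.support (fun z => 1 - Real.tanh (h + β * Real.sqrt x * z) ^ 2) = Set.univ := by
        ext z; simp only [Function.mem_support, Set.mem_univ, iff_true]
        have := _root_.tanh_sq_lt_one (h + β * Real.sqrt x * z); intro hcon; linarith [hcon]
      rw [this]
      simp
    · intro z
      have := _root_.tanh_sq_lt_one (h + β * Real.sqrt x * z)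
      simp only [Pi.zero_apply, sub_nonneg]
      linarith
    · exact (integrable_const 1).sub (by simpa [mul_assoc] using hint)
  have : ∫ z, (1 - Real.tanh (h + β * Real.sqrt x * z) ^ 2) ∂(gaussianReal 0 1)
      = 1 - phi h β x := by
    rw [integral_sub (integrable_const 1) (by simpa [mul_assoc] using hint)]
    simp [phi]
  linarith [key, this ▸ key]

lemma phi_nonneg (h β x : ℝ) : 0 ≤ phi h β x :=
  integral_nonneg fun z => sq_nonneg _

lemma pdf01 (z : ℝ) : gaussianPDFReal 0 1 z = (Real.sqrt (2*π))⁻¹ * rexp (-z^2/2) := by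
  simp [gaussianPDFReal]

lemma gaussian_integral_eq (g : ℝ → ℝ) :
    ∫ z, g z ∂(gaussianReal 0 1) = ∫ z, gaussianPDFReal 0 1 z * g z := by
  rw [gaussianReal_of_var_ne_zero 0 one_ne_zero]
  have h1 : (gaussianPDF 0 1) = fun z => ((gaussianPDFReal 0 1 z).toNNReal : ℝ≥0∞) := rfl
  rw [h1, integral_withDensity_eq_integral_smul
    ((measurable_gaussianPDFReal 0 1).real_toNNReal) g]
  congr 1; funext z
  rw [NNReal.smul_def, Real.coe_toNNReal _ (gaussianPDFReal_nonneg 0 1 z), smul_eq_mul]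

lemma integrable_abs_gaussian : Integrable (fun z => |z|) (gaussianReal 0 1) := by
  rw [gaussianReal_of_var_ne_zero 0 one_ne_zero,
    integrable_withDensity_iff_integrable_smul' (measurable_gaussianPDF 0 1)
      (ae_of_all _ fun z => ENNReal.ofReal_lt_top)]
  have heq : (fun z : ℝ => (gaussianPDF 0 1 z).toReal • |z|)
      = fun z => gaussianPDFReal 0 1 z * |z| := by
    funext z
    rw [smul_eq_mul, gaussianPDF, ENNReal.toReal_ofReal (gaussianPDFReal_nonneg 0 1 z)]
  rw [heq]
  have hint : Integrable (fun z : ℝ => (Real.sqrt (2*π))⁻¹ * rexp (-(1/4) * z^2)) := by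
    exact (integrable_exp_neg_mul_sq (by norm_num : (0:ℝ) < 1/4)).const_mul _
  refine hint.mono' ?_ ?_
  · exact ((measurable_gaussianPDFReal 0 1).mul measurable_abs).aestronglyMeasurable
  · filter_upwards with z
    rw [Real.norm_eq_abs, pdf01]
    have hC : 0 < (Real.sqrt (2*π))⁻¹ := by
      rw [inv_pos]; apply Real.sqrt_pos.mpr; positivity
    have h1 : |z| ≤ rexp (z^2/4) := by
      have h2 : |z| ≤ z^2/4 + 1 := by nlinarith [sq_abs z, sq_nonneg (|z| - 2)]
      linarith [Real.add_one_le_exp (z^2/4)]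
    have h3 : rexp (-z^2/2) * |z| ≤ rexp (-(1/4)*z^2) := by
      calc rexp (-z^2/2) * |z| ≤ rexp (-z^2/2) * rexp (z^2/4) := by
            apply mul_le_mul_of_nonneg_left h1 (Real.exp_nonneg _)
        _ = rexp (-(1/4)*z^2) := by rw [← Real.exp_add]; ring_nf
    rw [abs_of_nonneg (by positivity : (0:ℝ) ≤ (Real.sqrt (2*π))⁻¹ * rexp (-z^2/2) * |z|)]
    calc (Real.sqrt (2*π))⁻¹ * rexp (-z^2/2) * |z|
        = (Real.sqrt (2*π))⁻¹ * (rexp (-z^2/2) * |z|) := by ring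
      _ ≤ (Real.sqrt (2*π))⁻¹ * rexp (-(1/4)*z^2) := by
          apply mul_le_mul_of_nonneg_left h3 hC.le

lemma tanh_mul_self_pos {u : ℝ} (hu : u ≠ 0) : 0 < Real.tanh u * u := by
  have hc := Real.cosh_pos u
  rw [Real.tanh_eq_sinh_div_cosh]
  have hs : 0 < Real.sinh u * u := by
    rcases hu.lt_or_gt with hlt | hlt
    · have : Real.sinh u < 0 := by simpa using Real.sinh_lt_sinh.mpr hlt
      exact mul_pos_of_neg_of_neg this hlt
    · have : 0 < Real.sinh u := by simpa using Real.sinh_lt_sinh.mpr hlt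
      exact mul_pos this hlt
  calc (0:ℝ) < (Real.sinh u * u) / Real.cosh u := div_pos hs hc
    _ = Real.sinh u / Real.cosh u * u := by ring

lemma folded_pos {h σ : ℝ} (hh : h ≠ 0) (hσ : σ ≠ 0) {z : ℝ} (hz : h + σ * z ≠ 0) :
    0 < h * ((gaussianPDFReal 0 1 z - gaussianPDFReal 0 1 (-2*h/σ - z)) *
      (Real.tanh (h + σ*z) / Real.cosh (h + σ*z) ^ 2)) := by
  set u := h + σ * z with hu
  set c := -2*h/σ with hc
  have hC : 0 < (Real.sqrt (2*π))⁻¹ := by rw [inv_pos]; exact Real.sqrt_pos.mpr (by positivity)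
  have hs2 : 0 < σ^2 := by positivity
  have hkey : ((c - z)^2 - z^2) * σ^2 = 4*h*u := by
    rw [hc, hu]; field_simp; ring
  have claim1 : 0 < (gaussianPDFReal 0 1 z - gaussianPDFReal 0 1 (c - z)) * (u * h) := by
    rw [pdf01, pdf01]
    rcases (mul_ne_zero hz hh).lt_or_gt with hneg | hpos
    · have hmu : u * h < 0 := hneg
      have hlt : (c-z)^2 < z^2 := by nlinarith
      have hexp : rexp (-z^2/2) < rexp (-(c-z)^2/2) := by
        apply Real.exp_lt_exp.mpr; linarith
      have hd : (Real.sqrt (2*π))⁻¹ * rexp (-z^2/2) - (Real.sqrt (2*π))⁻¹ * rexp (-(c-z)^2/2) < 0 := by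
        nlinarith
      exact mul_pos_of_neg_of_neg hd hmu
    · have hmu : 0 < u * h := hpos
      have hlt : z^2 < (c-z)^2 := by nlinarith
      have hexp : rexp (-(c-z)^2/2) < rexp (-z^2/2) := by
        apply Real.exp_lt_exp.mpr; linarith
      have hd : 0 < (Real.sqrt (2*π))⁻¹ * rexp (-z^2/2) - (Real.sqrt (2*π))⁻¹ * rexp (-(c-z)^2/2) := by
        nlinarith
      exact mul_pos hd hmu
  have claim2 : 0 < (Real.tanh u / Real.cosh u ^ 2) * u := by
    have hc2 := Real.cosh_pos u
    have := tanh_mul_self_pos hz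
    calc (0:ℝ) < (Real.tanh u * u) / Real.cosh u ^ 2 := div_pos this (by positivity)
      _ = (Real.tanh u / Real.cosh u ^ 2) * u := by ring
  have hu2 : 0 < u^2 := by positivity
  have h3 := mul_pos claim1 claim2
  have h4 : ((gaussianPDFReal 0 1 z - gaussianPDFReal 0 1 (c - z)) * (u * h)) *
      ((Real.tanh u / Real.cosh u ^ 2) * u)
      = (h * ((gaussianPDFReal 0 1 z - gaussianPDFReal 0 1 (c - z)) *
        (Real.tanh u / Real.cosh u ^ 2))) * u^2 := by ring
  rw [h4] at h3
  nlinarith [h3, hu2]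

lemma hEk_pos {h σ : ℝ} (hh : h ≠ 0) (hσ : σ ≠ 0) :
    0 < h * ∫ z, Real.tanh (h + σ*z) / Real.cosh (h + σ*z)^2 ∂(gaussianReal 0 1) := by
  set k : ℝ → ℝ := fun z => Real.tanh (h + σ*z) / Real.cosh (h + σ*z)^2 with hk
  set p : ℝ → ℝ := gaussianPDFReal 0 1 with hp
  set c : ℝ := -2*h/σ with hc
  have cont_k : Continuous k := by
    apply Continuous.div
    · exact continuous_tanh.comp (by continuity)
    · exact (Real.continuous_cosh.comp (by continuity)).pow 2
    · intro z; positivity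
  have bdd_k : ∀ z, ‖k z‖ ≤ 1 := fun z => by
    rw [Real.norm_eq_abs]; exact abs_k_le_one _
  have pdfshift : ∀ z, p (c - z) = gaussianPDFReal c 1 z := by
    intro z
    rw [hp]
    unfold gaussianPDFReal
    have h1 : (c - z - 0)^2 = (z - c)^2 := by ring
    rw [h1]
  have intA : Integrable (fun z => k z * p z) :=
    Integrable.bdd_mul (integrable_gaussianPDFReal 0 1) cont_k.aestronglyMeasurable (ae_of_all _ bdd_k)
  have intB : Integrable (fun z => k z * p (c - z)) := by
    have := Integrable.bdd_mul (integrable_gaussianPDFReal c 1) cont_k.aestronglyMeasurable (ae_of_all _ bdd_k)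
    apply this.congr
    filter_upwards with z
    rw [pdfshift z]
  have hI : ∫ z, k z ∂(gaussianReal 0 1) = ∫ z, k z * p z := by
    rw [gaussian_integral_eq]
    congr 1; funext z; ring
  have hrefl : ∫ z, k z * p z = ∫ z, k (c - z) * p (c - z) := by
    have e2 : ∫ z, k (c + -z) * p (c + -z) = ∫ z, k (c + z) * p (c + z) := by
      simpa using integral_neg_eq_self (fun w => k (c + w) * p (c + w)) volume
    have e3 : ∫ z, k (c + z) * p (c + z) = ∫ z, k z * p z :=
      integral_add_left_eq_self (fun z => k z * p z) c
    have e1 : (fun z => k (c - z) * p (c - z)) = fun z => k (c + -z) * p (c + -z) := by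
      funext z; rw [sub_eq_add_neg]
    rw [e1, e2, e3]
  have kneg : ∀ z, k (c - z) = - k z := by
    intro z
    have harg : h + σ * (c - z) = -(h + σ * z) := by rw [hc]; field_simp; ring
    rw [hk]
    simp only [harg, Real.tanh_neg, Real.cosh_neg, neg_div]
  have refl2 : ∫ z, k z * p z = - ∫ z, k z * p (c - z) := by
    rw [hrefl, ← integral_neg]
    congr 1; funext z; rw [kneg z]; ring
  have hsplit : ∫ z, h * (k z * (p z - p (c - z)))
      = h * (∫ z, k z * p z) - h * (∫ z, k z * p (c - z)) := by
    rw [← mul_sub, ← integral_sub intA intB, ← integral_const_mul]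
    congr 1; funext z; ring
  have hJ : 0 < ∫ z, h * (k z * (p z - p (c - z))) := by
    rw [integral_pos_iff_support_of_nonneg]
    · have hsub : Set.Ioi (-h/σ) ⊆ Function.support (fun z => h * (k z * (p z - p (c - z)))) := by
        intro z hz
        simp only [Function.mem_support]
        have hzz : h + σ * z ≠ 0 := by
          have e : h + σ*z = σ*(z - (-h/σ)) := by field_simp; ring
          rw [e]
          exact mul_ne_zero hσ (sub_ne_zero_of_ne (ne_of_gt hz))
        have hpos := folded_pos hh hσ hzz
        intro hcon
        rw [show h * (k z * (p z - p (c - z))) = h * ((p z - p (c - z)) * k z) by ring] at hcon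
        rw [hk, hp, hc] at hcon
        rw [hcon] at hpos
        exact lt_irrefl _ hpos
      calc (0:ℝ≥0∞) < ⊤ := by simp
        _ = volume (Set.Ioi (-h/σ)) := (Real.volume_Ioi).symm
        _ ≤ _ := measure_mono hsub
    · intro z
      simp only [Pi.zero_apply]
      rcases eq_or_ne (h + σ * z) 0 with hz0 | hz0
      · have hk0 : k z = 0 := by
          rw [hk]; simp only; rw [hz0]; simp
        rw [hk0]; simp
      · have hpos := folded_pos hh hσ hz0
        rw [show h * (k z * (p z - p (c - z))) = h * ((p z - p (c - z)) * k z) by ring]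
        rw [hk, hp, hc]
        exact le_of_lt hpos
    · have heq : (fun z => h * (k z * (p z - p (c - z))))
          = fun z => h * (k z * p z - k z * p (c - z)) := by
        funext z; ring
      rw [heq]
      exact (intA.sub intB).const_mul h
  have h5 : h * (∫ z, k z * p z) = - (h * ∫ z, k z * p (c - z)) := by
    rw [refl2]; ring
  rw [hI]
  linarith [hJ, hsplit, h5]

lemma phi_hasDerivAt (h β : ℝ) {x₀ : ℝ} (hx₀ : 0 < x₀) :
    HasDerivAt (phi h β)
      (∫ z, Real.tanh (h + β*Real.sqrt x₀*z) / Real.cosh (h + β*Real.sqrt x₀*z)^2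
        * (β*z/Real.sqrt x₀) ∂(gaussianReal 0 1)) x₀ := by
  have hε : 0 < x₀/2 := by linarith
  have hsx₀ : 0 < Real.sqrt (x₀/2) := Real.sqrt_pos.mpr hε
  have hmain := hasDerivAt_integral_of_dominated_loc_of_deriv_le (μ := gaussianReal 0 1)
    (F := fun x z => Real.tanh (h + β*Real.sqrt x*z)^2)
    (F' := fun x z => Real.tanh (h + β*Real.sqrt x*z) / Real.cosh (h + β*Real.sqrt x*z)^2
      * (β*z/Real.sqrt x))
    (bound := fun z => (|β| / Real.sqrt (x₀/2)) * |z|)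
    (x₀ := x₀) (Metric.ball_mem_nhds x₀ hε) ?_ ?_ ?_ ?_ ?_ ?_
  · exact hmain.2
  · filter_upwards with x
    exact ((continuous_tanh.comp (by continuity)).pow 2).aestronglyMeasurable
  · exact integrable_integrand h (β * Real.sqrt x₀)
  · apply Continuous.aestronglyMeasurable
    apply Continuous.mul
    · apply Continuous.div
      · exact continuous_tanh.comp (by continuity)
      · exact (Real.continuous_cosh.comp (by continuity)).pow 2
      · intro z; positivity
    · exact (continuous_const.mul continuous_id).div_const _
  · filter_upwards with z
    intro x hx
    have hxball : |x - x₀| < x₀/2 := by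
      rw [Metric.mem_ball, Real.dist_eq] at hx; exact hx
    have hxpos : x₀/2 < x := by
      rcases abs_lt.mp hxball with ⟨h1, h2⟩; linarith
    have hsx : Real.sqrt (x₀/2) ≤ Real.sqrt x := Real.sqrt_le_sqrt (le_of_lt hxpos)
    have hsxpos : 0 < Real.sqrt x := lt_of_lt_of_le hsx₀ hsx
    rw [Real.norm_eq_abs, abs_mul]
    have hb1 : |Real.tanh (h + β*Real.sqrt x*z) / Real.cosh (h + β*Real.sqrt x*z)^2| ≤ 1 :=
      abs_k_le_one _
    have hb2 : |β*z/Real.sqrt x| ≤ |β| / Real.sqrt (x₀/2) * |z| := by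
      rw [abs_div, abs_mul, abs_of_pos hsxpos]
      rw [div_le_iff₀ hsxpos]
      have : |β| / Real.sqrt (x₀/2) * |z| * Real.sqrt x
          = (|β| * |z|) * (Real.sqrt x / Real.sqrt (x₀/2)) := by ring
      rw [this]
      have h1 : (1:ℝ) ≤ Real.sqrt x / Real.sqrt (x₀/2) := by
        rw [le_div_iff₀ hsx₀]; linarith
      nlinarith [mul_le_mul_of_nonneg_left h1 (mul_nonneg (abs_nonneg β) (abs_nonneg z))]
    calc |Real.tanh (h + β*Real.sqrt x*z) / Real.cosh (h + β*Real.sqrt x*z)^2| * |β*z/Real.sqrt x|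
        ≤ 1 * (|β| / Real.sqrt (x₀/2) * |z|) := by
          apply mul_le_mul hb1 hb2 (abs_nonneg _) zero_le_one
      _ = |β| / Real.sqrt (x₀/2) * |z| := by ring
  · exact integrable_abs_gaussian.const_mul _
  · filter_upwards with z
    intro x hx
    have hxball : |x - x₀| < x₀/2 := by
      rw [Metric.mem_ball, Real.dist_eq] at hx; exact hx
    have hxpos : 0 < x := by
      rcases abs_lt.mp hxball with ⟨h1, h2⟩; linarith
    have hsx : 0 < Real.sqrt x := Real.sqrt_pos.mpr hxpos
    have hsq := Real.hasDerivAt_sqrt (ne_of_gt hxpos)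
    have l1 : HasDerivAt (fun y : ℝ => h + β * Real.sqrt y * z)
        (β * (1/(2*Real.sqrt x)) * z) x := ((hsq.const_mul β).mul_const z).const_add h
    have l2 := tanh_hasDerivAt (h + β * Real.sqrt x * z)
    have l3 := (l2.comp x l1)
    have l4 := l3.pow 2
    refine l4.congr_deriv ?_
    have hne : Real.sqrt x ≠ 0 := ne_of_gt hsx
    rw [Function.comp_apply]
    field_simp
    ring

lemma xD_lt_phi (h β : ℝ) (hh : h ≠ 0) (hβ : β ≠ 0) {x : ℝ} (hx : 0 < x) :
    x * (∫ z, Real.tanh (h + β*Real.sqrt x*z) / Real.cosh (h + β*Real.sqrt x*z)^2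
        * (β*z/Real.sqrt x) ∂(gaussianReal 0 1)) < phi h β x := by
  have hsx : 0 < Real.sqrt x := Real.sqrt_pos.mpr hx
  set σ := β * Real.sqrt x with hσdef
  have hσ : σ ≠ 0 := mul_ne_zero hβ (ne_of_gt hsx)
  have cont_k : Continuous (fun z => Real.tanh (h + σ*z) / Real.cosh (h + σ*z)^2) := by
    apply Continuous.div
    · exact continuous_tanh.comp (by continuity)
    · exact (Real.continuous_cosh.comp (by continuity)).pow 2
    · intro z; positivity
  have e1 : x * (∫ z, Real.tanh (h + σ*z) / Real.cosh (h + σ*z)^2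
        * (β*z/Real.sqrt x) ∂(gaussianReal 0 1))
      = ∫ z, Real.tanh (h + σ*z) / Real.cosh (h + σ*z)^2 * (σ*z) ∂(gaussianReal 0 1) := by
    rw [← integral_const_mul]
    congr 1; funext z
    have hxs : x / Real.sqrt x = Real.sqrt x := Real.div_sqrt
    have : x * (β*z/Real.sqrt x) = σ * z := by
      rw [hσdef, mul_comm x (β*z/Real.sqrt x), div_mul_eq_mul_div, mul_div_assoc, hxs]
      ring
    calc x * (Real.tanh (h + σ*z) / Real.cosh (h + σ*z)^2 * (β*z/Real.sqrt x))
        = Real.tanh (h + σ*z) / Real.cosh (h + σ*z)^2 * (x * (β*z/Real.sqrt x)) := by ring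
      _ = Real.tanh (h + σ*z) / Real.cosh (h + σ*z)^2 * (σ*z) := by rw [this]
  have int1 : Integrable (fun z => (h + σ*z) * (Real.tanh (h + σ*z) / Real.cosh (h + σ*z)^2))
      (gaussianReal 0 1) := by
    apply integrable_of_bounded (by continuity) 1
    intro z
    have h1 := uk_nonneg (h + σ*z)
    have h2 := uk_le (h + σ*z)
    have h3 := _root_.tanh_sq_lt_one (h + σ*z)
    rw [abs_of_nonneg h1]
    linarith
  have int2 : Integrable (fun z => Real.tanh (h + σ*z) / Real.cosh (h + σ*z)^2)
      (gaussianReal 0 1) :=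
    integrable_of_bounded cont_k 1 (fun z => abs_k_le_one _)
  have e2 : ∫ z, Real.tanh (h + σ*z) / Real.cosh (h + σ*z)^2 * (σ*z) ∂(gaussianReal 0 1)
      = (∫ z, (h + σ*z) * (Real.tanh (h + σ*z) / Real.cosh (h + σ*z)^2) ∂(gaussianReal 0 1))
        - h * ∫ z, Real.tanh (h + σ*z) / Real.cosh (h + σ*z)^2 ∂(gaussianReal 0 1) := by
    rw [← integral_const_mul, ← integral_sub int1 (int2.const_mul h)]
    congr 1; funext z; ring
  have le1 : ∫ z, (h + σ*z) * (Real.tanh (h + σ*z) / Real.cosh (h + σ*z)^2) ∂(gaussianReal 0 1)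
      ≤ phi h β x := by
    have : phi h β x = ∫ z, Real.tanh (h + σ*z)^2 ∂(gaussianReal 0 1) := by
      rw [phi, hσdef]
    rw [this]
    apply integral_mono int1 (by simpa [mul_assoc, ← hσdef] using integrable_integrand h σ)
    intro z
    exact uk_le (h + σ*z)
  have pos1 := hEk_pos hh hσ
  rw [e1, e2]
  linarith

lemma ratio_strictAntiOn (h β : ℝ) (hh : h ≠ 0) (hβ : β ≠ 0) :
    StrictAntiOn (fun x => phi h β x / x) (Set.Ioi 0) := by
  apply strictAntiOn_of_deriv_neg (convex_Ioi 0)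
  · exact ((phi_continuous h β).continuousOn).div continuousOn_id (fun x hx => ne_of_gt hx)
  · intro x hx
    rw [interior_Ioi] at hx
    have hx : 0 < x := hx
    have hD := phi_hasDerivAt h β hx
    have hdiv := hD.div (hasDerivAt_id x) (ne_of_gt hx)
    simp only [id_eq] at hdiv
    rw [show (fun x => phi h β x / x) = phi h β / id from rfl, hdiv.deriv]
    have hcore := xD_lt_phi h β hh hβ hx
    apply div_neg_of_neg_of_pos
    · nlinarith [hcore]
    · positivity

/-- For `h ≠ 0`, `φ` has a unique fixed point `q > 0` on `[0,∞)`, with `φ(x) > x` on `[0,q)`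
and `φ(x) < x` on `(q,∞)`. -/
theorem stmt3 (h β : ℝ) (hh : h ≠ 0) :
    ∃ q : ℝ, 0 < q ∧ phi h β q = q ∧
      (∀ x, 0 ≤ x → phi h β x = x → x = q) ∧
      (∀ x, 0 ≤ x → x < q → x < phi h β x) ∧
      (∀ x, q < x → phi h β x < x) := by
  have htanh : 0 < Real.tanh h ^ 2 := by
    have h1 := tanh_ne_zero_of_ne_zero hh
    positivity
  by_cases hβ : β = 0
  · subst hβ
    have hconst : ∀ x, phi h 0 x = Real.tanh h ^ 2 := by intro x; simp [phi]
    refine ⟨Real.tanh h ^ 2, htanh, hconst _, ?_, ?_, ?_⟩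
    · intro x _ hfx; rw [hconst x] at hfx; exact hfx.symm
    · intro x _ hlt; rw [hconst]; exact hlt
    · intro x hlt; rw [hconst]; exact hlt
  · have hanti := ratio_strictAntiOn h β hh hβ
    have hcont : ContinuousOn (fun x => phi h β x - x) (Set.Icc 0 1) :=
      ((phi_continuous h β).sub continuous_id).continuousOn
    have hmem : (0:ℝ) ∈ Set.Icc ((fun x => phi h β x - x) 1) ((fun x => phi h β x - x) 0) := by
      constructor
      · simp only; linarith [phi_lt_one h β 1]
      · simp only [sub_zero]; rw [phi_zero]; exact htanh.le
    obtain ⟨q, hqmem, hq⟩ := intermediate_value_Icc' zero_le_one hcont hmem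
    simp only at hq
    have hfix : phi h β q = q := by linarith [hq]
    have hq0 : 0 < q := by
      rcases eq_or_lt_of_le hqmem.1 with he | hlt
      · exfalso
        rw [← he] at hfix
        rw [phi_zero] at hfix
        linarith
      · exact hlt
    have hrq : phi h β q / q = 1 := by rw [hfix]; exact div_self (ne_of_gt hq0)
    refine ⟨q, hq0, hfix, ?_, ?_, ?_⟩
    · intro x hx hfx
      have hx0 : 0 < x := by
        rcases eq_or_lt_of_le hx with he | hlt
        · exfalso; rw [← he] at hfx; rw [phi_zero] at hfx; linarith
        · exact hlt
      have hrx : phi h β x / x = 1 := by rw [hfx]; exact div_self (ne_of_gt hx0)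
      by_contra hne
      rcases lt_or_gt_of_ne hne with hlt | hgt
      · have := hanti (Set.mem_Ioi.mpr hx0) (Set.mem_Ioi.mpr hq0) hlt
        simp only at this
        rw [hrx, hrq] at this; exact lt_irrefl _ this
      · have := hanti (Set.mem_Ioi.mpr hq0) (Set.mem_Ioi.mpr hx0) hgt
        simp only at this
        rw [hrx, hrq] at this; exact lt_irrefl _ this
    · intro x hx hlt
      rcases eq_or_lt_of_le hx with he | hx0
      · rw [← he, phi_zero]; exact htanh
      · have hlt2 := hanti (Set.mem_Ioi.mpr hx0) (Set.mem_Ioi.mpr hq0) hlt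
        simp only at hlt2
        rw [hrq] at hlt2
        exact (one_lt_div hx0).mp hlt2
    · intro x hlt
      have hx0 : 0 < x := lt_trans hq0 hlt
      have hlt2 := hanti (Set.mem_Ioi.mpr hq0) (Set.mem_Ioi.mpr hx0) hlt
      simp only at hlt2
      rw [hrq] at hlt2
      exact (div_lt_one hx0).mp hlt2
end

section
/- Let (X,Y) be a centered bivariate Gaussian vector and f, g : ℝ → ℝ be C² functions, bounded with two bounded derivatives. Then the derivative of E[f(X)g(Y)] with respect to Cov(X,Y) (at fixed variances) equals E[f'(X)g'(Y)]. -/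
open MeasureTheory ProbabilityTheory
open scoped ENNReal NNReal


noncomputable def myphi (x : ℝ) : ℝ := (Real.sqrt (2 * Real.pi))⁻¹ * Real.exp (-x ^ 2 / 2)

lemma myphi_eq : gaussianPDFReal 0 1 = myphi := by
  funext x
  simp [gaussianPDFReal, myphi]

lemma myphi_nonneg (x : ℝ) : 0 ≤ myphi x :=
  mul_nonneg (inv_nonneg.2 (Real.sqrt_nonneg _)) (Real.exp_pos _).le

lemma myphi_cont : Continuous myphi := by
  unfold myphi; fun_prop

lemma myphi_hasDerivAt (x : ℝ) : HasDerivAt myphi (-(x * myphi x)) x := by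
  have h1 : HasDerivAt (fun x : ℝ => -x ^ 2 / 2) (-x) x := by
    have h := ((hasDerivAt_pow 2 x).neg).div_const 2
    norm_num at h
    rwa [show (-(2 * x) / 2 : ℝ) = -x by ring] at h
  have h2 := (h1.exp).const_mul (Real.sqrt (2 * Real.pi))⁻¹
  refine h2.congr_deriv ?_
  unfold myphi
  ring

lemma integrable_myphi : Integrable myphi := by
  have h : Integrable (fun x : ℝ => Real.exp (-(1/2 : ℝ) * x ^ 2)) := integrable_exp_neg_mul_sq (by norm_num)
  have := h.const_mul (Real.sqrt (2 * Real.pi))⁻¹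
  refine this.congr (Filter.Eventually.of_forall fun x => ?_)
  show (Real.sqrt (2 * Real.pi))⁻¹ * Real.exp (-(1/2:ℝ) * x ^ 2) = myphi x
  unfold myphi
  rw [show (-x ^ 2 / 2 : ℝ) = -(1/2:ℝ) * x ^ 2 by ring]

lemma integrable_mul_myphi : Integrable (fun x => x * myphi x) := by
  have h : Integrable (fun x : ℝ => x * Real.exp (-(1/2 : ℝ) * x ^ 2)) := integrable_mul_exp_neg_mul_sq (by norm_num)
  have := h.const_mul (Real.sqrt (2 * Real.pi))⁻¹
  refine this.congr (Filter.Eventually.of_forall fun x => ?_)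
  show (Real.sqrt (2 * Real.pi))⁻¹ * (x * Real.exp (-(1/2:ℝ) * x ^ 2)) = x * myphi x
  unfold myphi
  rw [show (-x ^ 2 / 2 : ℝ) = -(1/2:ℝ) * x ^ 2 by ring]
  ring

lemma integrable_abs_mul_myphi : Integrable (fun x => |x| * myphi x) := by
  refine integrable_mul_myphi.abs.congr (Filter.Eventually.of_forall fun x => ?_)
  show |x * myphi x| = |x| * myphi x
  rw [abs_mul, abs_of_nonneg (myphi_nonneg x)]

lemma integrable_myphi_mul {h : ℝ → ℝ} (hm : AEStronglyMeasurable h volume) (A B : ℝ)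
    (hb : ∀ x, |h x| ≤ A + B * |x|) : Integrable (fun x => myphi x * h x) := by
  refine Integrable.mono' ((integrable_myphi.const_mul (abs A)).add (integrable_abs_mul_myphi.const_mul (abs B)))
    (myphi_cont.aestronglyMeasurable.mul hm) (Filter.Eventually.of_forall fun x => ?_)
  have h1 := hb x
  have h2 := myphi_nonneg x
  have h3 : A ≤ |A| := le_abs_self A
  have h4 : B ≤ |B| := le_abs_self B
  have h5 : (0:ℝ) ≤ |x| := abs_nonneg x
  rw [Real.norm_eq_abs, abs_mul, abs_of_nonneg h2]
  calc myphi x * |h x| ≤ myphi x * (|A| + |B| * |x|) := by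
        refine mul_le_mul_of_nonneg_left (h1.trans ?_) h2
        nlinarith
    _ = |A| * myphi x + |B| * (|x| * myphi x) := by ring

lemma integral_gauss (h : ℝ → ℝ) :
    ∫ x, h x ∂(gaussianReal 0 1) = ∫ x, myphi x * h x := by
  rw [gaussianReal_of_var_ne_zero 0 one_ne_zero]
  have hd : gaussianPDF 0 1 = fun x => ((myphi x).toNNReal : ℝ≥0∞) := by
    funext x; rw [gaussianPDF, myphi_eq]; rfl
  rw [hd, integral_withDensity_eq_integral_smul
    (by exact (myphi_eq ▸ measurable_gaussianPDFReal 0 1).real_toNNReal) h]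
  congr 1
  funext x
  simp [NNReal.smul_def, Real.coe_toNNReal _ (myphi_nonneg x)]

lemma integrable_gauss {h : ℝ → ℝ} (hm : AEStronglyMeasurable h volume) (A B : ℝ)
    (hb : ∀ x, |h x| ≤ A + B * |x|) : Integrable h (gaussianReal 0 1) := by
  rw [gaussianReal_of_var_ne_zero 0 one_ne_zero,
    integrable_withDensity_iff (measurable_gaussianPDF 0 1)
      (Filter.Eventually.of_forall fun x => ENNReal.ofReal_lt_top)]
  have : (fun x => h x * (gaussianPDF 0 1 x).toReal) = fun x => myphi x * h x := by
    funext x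
    rw [gaussianPDF, ENNReal.toReal_ofReal (gaussianPDFReal_nonneg 0 1 x), myphi_eq]
    ring
  rw [this]
  exact integrable_myphi_mul hm A B hb

/-- Stein's lemma / Gaussian integration by parts. -/
lemma stein {h h' : ℝ → ℝ} (hm' : AEStronglyMeasurable h' volume)
    (hd : ∀ x, HasDerivAt h (h' x) x) {C C' : ℝ} (hb : ∀ x, |h x| ≤ C) (hb' : ∀ x, |h' x| ≤ C') :
    ∫ x, x * h x ∂(gaussianReal 0 1) = ∫ x, h' x ∂(gaussianReal 0 1) := by
  have hch : Continuous h := by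
    rw [continuous_iff_continuousAt]; exact fun x => (hd x).continuousAt
  have hmh : AEStronglyMeasurable h volume := hch.aestronglyMeasurable
  rw [integral_gauss, integral_gauss]
  have hF : ∀ x, HasDerivAt (fun x => myphi x * h x)
      (-(x * myphi x) * h x + myphi x * h' x) x := fun x => (myphi_hasDerivAt x).mul (hd x)
  have int1 : Integrable (fun x => myphi x * h' x) :=
    integrable_myphi_mul hm' C' 0 (fun x => by simpa using hb' x)
  have int2 : Integrable (fun x => myphi x * (x * h x)) := by
    refine integrable_myphi_mul (aestronglyMeasurable_id.mul hmh) 0 C fun x => ?_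
    rw [abs_mul, zero_add, mul_comm C]
    exact mul_le_mul_of_nonneg_left (hb x) (abs_nonneg x)
  have intF : Integrable (fun x => myphi x * h x) :=
    integrable_myphi_mul hmh C 0 (fun x => by simpa using hb x)
  have intF' : Integrable (fun x => -(x * myphi x) * h x + myphi x * h' x) := by
    refine (int1.sub int2).congr (Filter.Eventually.of_forall fun x => ?_)
    simp only [Pi.sub_apply]
    ring
  have h0 := integral_eq_zero_of_hasDerivAt_of_integrable hF intF' intF
  have hsplit : ∫ x, (-(x * myphi x) * h x + myphi x * h' x) =
      (∫ x, myphi x * h' x) - ∫ x, myphi x * (x * h x) := by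
    rw [← integral_sub int1 int2]
    congr 1
    funext x
    ring
  rw [hsplit] at h0
  linarith

lemma integrable_prob_bdd {α : Type*} [MeasurableSpace α] {μ : Measure α} [IsFiniteMeasure μ]
    {h : α → ℝ} (hm : AEStronglyMeasurable h μ) {C : ℝ} (hb : ∀ x, |h x| ≤ C) :
    Integrable h μ :=
  Integrable.mono' (integrable_const C) hm
    (Filter.Eventually.of_forall fun x => by simpa [Real.norm_eq_abs] using hb x)

lemma abs_integral_le_prob {α : Type*} [MeasurableSpace α] {μ : Measure α} [IsProbabilityMeasure μ]
    {h : α → ℝ} {C : ℝ} (hb : ∀ x, |h x| ≤ C) : |∫ x, h x ∂μ| ≤ C := by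
  have := norm_integral_le_of_norm_le_const (μ := μ) (f := h) (C := C)
    (Filter.Eventually.of_forall fun x => by simpa [Real.norm_eq_abs] using hb x)
  simpa [Real.norm_eq_abs, measure_univ] using this

lemma integrable_gauss_abs : Integrable (fun x : ℝ => |x|) (gaussianReal 0 1) :=
  integrable_gauss continuous_abs.aestronglyMeasurable 0 1 (fun x => by simp)

lemma integrable_comp_fst {h : ℝ → ℝ} (hm : AEStronglyMeasurable h (gaussianReal 0 1))
    (hi : Integrable h (gaussianReal 0 1)) :
    Integrable (fun z : ℝ × ℝ => h z.1) ((gaussianReal 0 1).prod (gaussianReal 0 1)) := by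
  have hmap : ((gaussianReal 0 1).prod (gaussianReal 0 1)).map Prod.fst = gaussianReal 0 1 := by
    simp
  refine (integrable_map_measure (by rw [hmap]; exact hm) measurable_fst.aemeasurable).1 ?_
  rw [hmap]; exact hi

lemma integrable_comp_snd {h : ℝ → ℝ} (hm : AEStronglyMeasurable h (gaussianReal 0 1))
    (hi : Integrable h (gaussianReal 0 1)) :
    Integrable (fun z : ℝ × ℝ => h z.2) ((gaussianReal 0 1).prod (gaussianReal 0 1)) := by
  have hmap : ((gaussianReal 0 1).prod (gaussianReal 0 1)).map Prod.snd = gaussianReal 0 1 := by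
    simp
  refine (integrable_map_measure (by rw [hmap]; exact hm) measurable_snd.aemeasurable).1 ?_
  rw [hmap]; exact hi

lemma integrable_P_dom {h : ℝ × ℝ → ℝ}
    (hm : AEStronglyMeasurable h ((gaussianReal 0 1).prod (gaussianReal 0 1)))
    (K0 K1 K2 : ℝ) (hb : ∀ z, |h z| ≤ K0 + K1 * |z.1| + K2 * |z.2|) :
    Integrable h ((gaussianReal 0 1).prod (gaussianReal 0 1)) := by
  refine Integrable.mono'
    (((integrable_const K0).add
      ((integrable_comp_fst continuous_abs.aestronglyMeasurable integrable_gauss_abs).const_mul K1)).add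
      ((integrable_comp_snd continuous_abs.aestronglyMeasurable integrable_gauss_abs).const_mul K2))
    hm (Filter.Eventually.of_forall fun z => ?_)
  simpa [Real.norm_eq_abs] using hb z


/-- Expectation of `F (X, Y)` where `(X, Y)` is a centered bivariate Gaussian with
`Var X = t₂`, `Var Y = t₃`, `Cov(X,Y) = t₁`, realized via two independent standard
Gaussians `z₁, z₂` as `X = √t₂ z₁`, `Y = (t₁/√t₂) z₁ + √(t₃ − t₁²/t₂) z₂`. -/
noncomputable def Egauss2 (F : ℝ → ℝ → ℝ) (t₁ t₂ t₃ : ℝ) : ℝ :=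
  ∫ z₁, ∫ z₂,
    F (Real.sqrt t₂ * z₁)
      (t₁ / Real.sqrt t₂ * z₁ + Real.sqrt (t₃ - t₁ ^ 2 / t₂) * z₂)
    ∂(gaussianReal 0 1) ∂(gaussianReal 0 1)

set_option maxHeartbeats 2000000 in
/-- Price's theorem: for `(X,Y)` centered bivariate Gaussian and `f, g` bounded `C²`
functions with bounded derivatives,
`∂/∂Cov(X,Y) E[f(X) g(Y)] = E[f'(X) g'(Y)]` (at fixed variances). -/
theorem stmt9 (f g : ℝ → ℝ) (hf : ContDiff ℝ 2 f) (hg : ContDiff ℝ 2 g)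
    (hfb : ∀ k ≤ 2, ∃ C, ∀ x, |iteratedDeriv k f x| ≤ C)
    (hgb : ∀ k ≤ 2, ∃ C, ∀ x, |iteratedDeriv k g x| ≤ C)
    (t₁ t₂ t₃ : ℝ) (h₂ : 0 < t₂) (h₃ : 0 < t₃) (h₁ : |t₁| < Real.sqrt (t₂ * t₃)) :
    HasDerivAt (fun t => Egauss2 (fun x y => f x * g y) t t₂ t₃)
      (Egauss2 (fun x y => deriv f x * deriv g y) t₁ t₂ t₃) t₁ := by
  classical
  -- bounds on f, g and their derivatives
  obtain ⟨Cf0, hf0'⟩ := hfb 0 (by norm_num)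
  obtain ⟨Cf1, hf1'⟩ := hfb 1 (by norm_num)
  obtain ⟨Cg0, hg0'⟩ := hgb 0 (by norm_num)
  obtain ⟨Cg1, hg1'⟩ := hgb 1 (by norm_num)
  obtain ⟨Cg2, hg2'⟩ := hgb 2 le_rfl
  have hf0 : ∀ x, |f x| ≤ Cf0 := by simpa [iteratedDeriv_zero] using hf0'
  have hf1 : ∀ x, |deriv f x| ≤ Cf1 := by simpa [iteratedDeriv_one] using hf1'
  have hg0 : ∀ x, |g x| ≤ Cg0 := by simpa [iteratedDeriv_zero] using hg0'
  have hg1 : ∀ x, |deriv g x| ≤ Cg1 := by simpa [iteratedDeriv_one] using hg1'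
  have hg2 : ∀ x, |deriv (deriv g) x| ≤ Cg2 := by
    have h := hg2'
    rw [show (2:ℕ) = 1+1 from rfl, iteratedDeriv_succ, iteratedDeriv_one] at h
    exact h
  have hCf0 : 0 ≤ Cf0 := le_trans (abs_nonneg _) (hf0 0)
  have hCf1 : 0 ≤ Cf1 := le_trans (abs_nonneg _) (hf1 0)
  have hCg0 : 0 ≤ Cg0 := le_trans (abs_nonneg _) (hg0 0)
  have hCg1 : 0 ≤ Cg1 := le_trans (abs_nonneg _) (hg1 0)
  have hCg2 : 0 ≤ Cg2 := le_trans (abs_nonneg _) (hg2 0)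
  -- smoothness
  have hfd : Differentiable ℝ f := hf.differentiable (by norm_num)
  have hgd : Differentiable ℝ g := hg.differentiable (by norm_num)
  have hfc : Continuous f := hf.continuous
  have hgc : Continuous g := hg.continuous
  have hfc1 : Continuous (deriv f) := hf.continuous_deriv one_le_two
  have hgc1 : Continuous (deriv g) := hg.continuous_deriv one_le_two
  have hgcd1 : ContDiff ℝ 1 (deriv g) := by
    have h2 : ContDiff ℝ ((1 : WithTop ℕ∞) + 1) g := by
      rw [show ((1 : WithTop ℕ∞) + 1) = 2 by norm_num]
      exact hg
    exact (contDiff_succ_iff_deriv.mp h2).2.2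
  have hgd' : Differentiable ℝ (deriv g) := hgcd1.differentiable (by norm_num)
  have hgc2 : Continuous (deriv (deriv g)) := hgcd1.continuous_deriv le_rfl
  -- constants
  have hA : (0:ℝ) < Real.sqrt t₂ := Real.sqrt_pos.2 h₂
  have hA2 : Real.sqrt t₂ ^ 2 = t₂ := Real.sq_sqrt h₂.le
  have hspos : 0 < Real.sqrt (t₂ * t₃) := Real.sqrt_pos.2 (mul_pos h₂ h₃)
  set r := (|t₁| + Real.sqrt (t₂ * t₃)) / 2 with hr_def
  set ε := (Real.sqrt (t₂ * t₃) - |t₁|) / 2 with hε_def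
  have hεpos : 0 < ε := by rw [hε_def]; linarith
  have hball : ∀ t ∈ Metric.ball t₁ ε, |t| ≤ r := by
    intro t ht
    rw [Metric.mem_ball, Real.dist_eq] at ht
    have h3 : |t| ≤ |t₁| + |t - t₁| := by
      calc |t| = |t₁ + (t - t₁)| := by ring_nf
        _ ≤ |t₁| + |t - t₁| := abs_add_le _ _
    rw [hr_def]
    rw [hε_def] at ht
    linarith
  have hr0 : 0 ≤ r := by rw [hr_def]; positivity
  have hrs : r < Real.sqrt (t₂ * t₃) := by rw [hr_def]; linarith
  have hsq : Real.sqrt (t₂ * t₃) ^ 2 = t₂ * t₃ := Real.sq_sqrt (mul_pos h₂ h₃).le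
  have hr2 : r ^ 2 < t₂ * t₃ := by nlinarith
  set δ := t₃ - r ^ 2 / t₂ with hδ_def
  have hδpos : 0 < δ := by
    rw [hδ_def]
    have : r ^ 2 / t₂ < t₃ := (div_lt_iff₀ h₂).2 (by nlinarith)
    linarith
  have hq : ∀ t, |t| ≤ r → δ ≤ t₃ - t ^ 2 / t₂ := by
    intro t ht
    rw [hδ_def]
    have h2 : t ^ 2 ≤ r ^ 2 := by nlinarith [sq_abs t, abs_nonneg t]
    have h3 : t ^ 2 / t₂ ≤ r ^ 2 / t₂ := by gcongr
    linarith
  have hqpos : ∀ t, |t| ≤ r → 0 < t₃ - t ^ 2 / t₂ := fun t ht => lt_of_lt_of_le hδpos (hq t ht)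
  have hsqδ : 0 < Real.sqrt δ := Real.sqrt_pos.2 hδpos
  have ht₁r : |t₁| ≤ r := by rw [hr_def]; linarith
  have hCc : 0 < Real.sqrt (t₃ - t₁ ^ 2 / t₂) := Real.sqrt_pos.2 (hqpos t₁ ht₁r)
  -- derivative of the √ coefficient
  have hcd : ∀ t, |t| ≤ r → HasDerivAt (fun u : ℝ => Real.sqrt (t₃ - u ^ 2 / t₂))
      (-t / (t₂ * Real.sqrt (t₃ - t ^ 2 / t₂))) t := by
    intro t ht
    have hq' : HasDerivAt (fun u : ℝ => t₃ - u ^ 2 / t₂) (-(2 * t) / t₂) t := by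
      have h := ((hasDerivAt_pow 2 t).div_const t₂).const_sub t₃
      norm_num at h
      refine h.congr_deriv ?_
      ring
    have h2 := hq'.sqrt (ne_of_gt (hqpos t ht))
    convert h2 using 1
    have h3 : Real.sqrt (t₃ - t ^ 2 / t₂) ≠ 0 := ne_of_gt (Real.sqrt_pos.2 (hqpos t ht))
    field_simp
  set K2 := r / (t₂ * Real.sqrt δ) with hK2_def
  have hK2nn : 0 ≤ K2 := by rw [hK2_def]; positivity
  have hK2b : ∀ t, |t| ≤ r → |(-t / (t₂ * Real.sqrt (t₃ - t ^ 2 / t₂)))| ≤ K2 := by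
    intro t ht
    rw [hK2_def, abs_div, abs_neg]
    have hd1 : 0 < t₂ * Real.sqrt (t₃ - t ^ 2 / t₂) :=
      mul_pos h₂ (Real.sqrt_pos.2 (hqpos t ht))
    rw [abs_of_pos hd1]
    exact div_le_div₀ hr0 ht (mul_pos h₂ hsqδ)
      (by gcongr; exact hq t ht)
  -- abbreviations (written out explicitly everywhere)
  have measF : ∀ t : ℝ, AEStronglyMeasurable
      (fun z : ℝ × ℝ => f (Real.sqrt t₂ * z.1) *
        g (t / Real.sqrt t₂ * z.1 + Real.sqrt (t₃ - t ^ 2 / t₂) * z.2))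
      ((gaussianReal 0 1).prod (gaussianReal 0 1)) := by
    intro t
    refine Continuous.aestronglyMeasurable ?_
    exact (hfc.comp (continuous_const.mul continuous_fst)).mul
      (hgc.comp ((continuous_const.mul continuous_fst).add
        (continuous_const.mul continuous_snd)))
  have measF' : ∀ t : ℝ, AEStronglyMeasurable
      (fun z : ℝ × ℝ => f (Real.sqrt t₂ * z.1) *
        (deriv g (t / Real.sqrt t₂ * z.1 + Real.sqrt (t₃ - t ^ 2 / t₂) * z.2) *
          (1 / Real.sqrt t₂ * z.1 + (-t / (t₂ * Real.sqrt (t₃ - t ^ 2 / t₂))) * z.2)))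
      ((gaussianReal 0 1).prod (gaussianReal 0 1)) := by
    intro t
    refine Continuous.aestronglyMeasurable ?_
    exact (hfc.comp (continuous_const.mul continuous_fst)).mul
      ((hgc1.comp ((continuous_const.mul continuous_fst).add
        (continuous_const.mul continuous_snd))).mul
        ((continuous_const.mul continuous_fst).add (continuous_const.mul continuous_snd)))
  have intF : ∀ t : ℝ, Integrable
      (fun z : ℝ × ℝ => f (Real.sqrt t₂ * z.1) *
        g (t / Real.sqrt t₂ * z.1 + Real.sqrt (t₃ - t ^ 2 / t₂) * z.2))
      ((gaussianReal 0 1).prod (gaussianReal 0 1)) := by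
    intro t
    refine integrable_P_dom (measF t) (Cf0 * Cg0) 0 0 (fun z => ?_)
    have h := mul_le_mul (hf0 (Real.sqrt t₂ * z.1))
      (hg0 (t / Real.sqrt t₂ * z.1 + Real.sqrt (t₃ - t ^ 2 / t₂) * z.2))
      (abs_nonneg _) hCf0
    rw [abs_mul]
    linarith
  have boundF' : ∀ z : ℝ × ℝ, ∀ t ∈ Metric.ball t₁ ε,
      |f (Real.sqrt t₂ * z.1) *
        (deriv g (t / Real.sqrt t₂ * z.1 + Real.sqrt (t₃ - t ^ 2 / t₂) * z.2) *
          (1 / Real.sqrt t₂ * z.1 + (-t / (t₂ * Real.sqrt (t₃ - t ^ 2 / t₂))) * z.2))| ≤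
      0 + Cf0 * Cg1 * (1 / Real.sqrt t₂) * |z.1| + Cf0 * Cg1 * K2 * |z.2| := by
    intro z t ht
    have htr := hball t ht
    have e1 : |1 / Real.sqrt t₂ * z.1 + (-t / (t₂ * Real.sqrt (t₃ - t ^ 2 / t₂))) * z.2| ≤
        1 / Real.sqrt t₂ * |z.1| + K2 * |z.2| := by
      have e2 := abs_add_le (1 / Real.sqrt t₂ * z.1)
        ((-t / (t₂ * Real.sqrt (t₃ - t ^ 2 / t₂))) * z.2)
      rw [abs_mul, abs_mul, abs_of_pos (by positivity : (0:ℝ) < 1 / Real.sqrt t₂)] at e2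
      have e3 := mul_le_mul_of_nonneg_right (hK2b t htr) (abs_nonneg z.2)
      linarith
    have e4 : |deriv g (t / Real.sqrt t₂ * z.1 + Real.sqrt (t₃ - t ^ 2 / t₂) * z.2) *
        (1 / Real.sqrt t₂ * z.1 + (-t / (t₂ * Real.sqrt (t₃ - t ^ 2 / t₂))) * z.2)| ≤
        Cg1 * (1 / Real.sqrt t₂ * |z.1| + K2 * |z.2|) := by
      rw [abs_mul]
      exact mul_le_mul (hg1 _) e1 (abs_nonneg _) hCg1
    have e5 : |f (Real.sqrt t₂ * z.1)| ≤ Cf0 := hf0 _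
    rw [abs_mul]
    calc |f (Real.sqrt t₂ * z.1)| * _ ≤ Cf0 * (Cg1 * (1 / Real.sqrt t₂ * |z.1| + K2 * |z.2|)) :=
          mul_le_mul e5 e4 (abs_nonneg _) hCf0
      _ = 0 + Cf0 * Cg1 * (1 / Real.sqrt t₂) * |z.1| + Cf0 * Cg1 * K2 * |z.2| := by ring
  have intBound : Integrable
      (fun z : ℝ × ℝ => 0 + Cf0 * Cg1 * (1 / Real.sqrt t₂) * |z.1| + Cf0 * Cg1 * K2 * |z.2|)
      ((gaussianReal 0 1).prod (gaussianReal 0 1)) := by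
    refine integrable_P_dom ?_ 0 (Cf0 * Cg1 * (1 / Real.sqrt t₂)) (Cf0 * Cg1 * K2)
      (fun z => ?_)
    · refine Continuous.aestronglyMeasurable ?_
      exact (continuous_const.add
        (continuous_const.mul (continuous_abs.comp continuous_fst))).add
        (continuous_const.mul (continuous_abs.comp continuous_snd))
    · have h1 : 0 ≤ Cf0 * Cg1 * (1 / Real.sqrt t₂) * |z.1| := by positivity
      have h2 : 0 ≤ Cf0 * Cg1 * K2 * |z.2| := by positivity
      rw [abs_of_nonneg (by linarith)]
  have diffF : ∀ z : ℝ × ℝ, ∀ t ∈ Metric.ball t₁ ε,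
      HasDerivAt (fun u : ℝ => f (Real.sqrt t₂ * z.1) *
          g (u / Real.sqrt t₂ * z.1 + Real.sqrt (t₃ - u ^ 2 / t₂) * z.2))
        (f (Real.sqrt t₂ * z.1) *
          (deriv g (t / Real.sqrt t₂ * z.1 + Real.sqrt (t₃ - t ^ 2 / t₂) * z.2) *
            (1 / Real.sqrt t₂ * z.1 + (-t / (t₂ * Real.sqrt (t₃ - t ^ 2 / t₂))) * z.2))) t := by
    intro z t ht
    have htr := hball t ht
    have harg : HasDerivAt
        (fun u : ℝ => u / Real.sqrt t₂ * z.1 + Real.sqrt (t₃ - u ^ 2 / t₂) * z.2)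
        (1 / Real.sqrt t₂ * z.1 + (-t / (t₂ * Real.sqrt (t₃ - t ^ 2 / t₂))) * z.2) t :=
      (((hasDerivAt_id t).div_const (Real.sqrt t₂)).mul_const z.1).add
        ((hcd t htr).mul_const z.2)
    have hgat : HasDerivAt g
        (deriv g (t / Real.sqrt t₂ * z.1 + Real.sqrt (t₃ - t ^ 2 / t₂) * z.2))
        (t / Real.sqrt t₂ * z.1 + Real.sqrt (t₃ - t ^ 2 / t₂) * z.2) :=
      (hgd _).hasDerivAt
    exact (hgat.comp t harg).const_mul (f (Real.sqrt t₂ * z.1))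
  -- differentiation under the integral sign over the product measure
  -- differentiation under the integral sign over the product measure
  have key := hasDerivAt_integral_of_dominated_loc_of_deriv_le
      (μ := (gaussianReal 0 1).prod (gaussianReal 0 1))
      (F := fun t (z : ℝ × ℝ) => f (Real.sqrt t₂ * z.1) *
        g (t / Real.sqrt t₂ * z.1 + Real.sqrt (t₃ - t ^ 2 / t₂) * z.2))
      (F' := fun t (z : ℝ × ℝ) => f (Real.sqrt t₂ * z.1) *
        (deriv g (t / Real.sqrt t₂ * z.1 + Real.sqrt (t₃ - t ^ 2 / t₂) * z.2) *
          (1 / Real.sqrt t₂ * z.1 + (-t / (t₂ * Real.sqrt (t₃ - t ^ 2 / t₂))) * z.2)))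
      (x₀ := t₁) (s := Metric.ball t₁ ε)
      (bound := fun z : ℝ × ℝ => 0 + Cf0 * Cg1 * (1 / Real.sqrt t₂) * |z.1| +
        Cf0 * Cg1 * K2 * |z.2|)
      (Metric.ball_mem_nhds t₁ hεpos)
      (Filter.Eventually.of_forall measF)
      (intF t₁)
      (measF' t₁)
      (Filter.Eventually.of_forall fun z t ht => by
        rw [Real.norm_eq_abs]; exact boundF' z t ht)
      intBound
      (Filter.Eventually.of_forall fun z t ht => diffF z t ht)
  obtain ⟨-, hDer⟩ := key
  -- pointwise bounds for the Stein step
  have hψb : ∀ x y : ℝ, |f (Real.sqrt t₂ * x) * deriv g (t₁ / Real.sqrt t₂ * x + Real.sqrt (t₃ - t₁ ^ 2 / t₂) * y)| ≤ Cf0 * Cg1 := by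
    intro x y
    rw [abs_mul]
    exact mul_le_mul (hf0 _) (hg1 _) (abs_nonneg _) hCf0
  have hJ'b : ∀ x y : ℝ, |deriv f (Real.sqrt t₂ * x) * deriv g (t₁ / Real.sqrt t₂ * x + Real.sqrt (t₃ - t₁ ^ 2 / t₂) * y)| ≤ Cf1 * Cg1 := by
    intro x y
    rw [abs_mul]
    exact mul_le_mul (hf1 _) (hg1 _) (abs_nonneg _) hCf1
  have hJ2b : ∀ x y : ℝ, |f (Real.sqrt t₂ * x) * deriv (deriv g) (t₁ / Real.sqrt t₂ * x + Real.sqrt (t₃ - t₁ ^ 2 / t₂) * y)| ≤ Cf0 * Cg2 := by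
    intro x y
    rw [abs_mul]
    exact mul_le_mul (hf0 _) (hg2 _) (abs_nonneg _) hCf0
  have hψdb : ∀ x y : ℝ, |Real.sqrt t₂ * (deriv f (Real.sqrt t₂ * x) * deriv g (t₁ / Real.sqrt t₂ * x + Real.sqrt (t₃ - t₁ ^ 2 / t₂) * y)) + t₁ / Real.sqrt t₂ * (f (Real.sqrt t₂ * x) * deriv (deriv g) (t₁ / Real.sqrt t₂ * x + Real.sqrt (t₃ - t₁ ^ 2 / t₂) * y))| ≤ Real.sqrt t₂ * (Cf1 * Cg1) + |t₁ / Real.sqrt t₂| * (Cf0 * Cg2) := by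
    intro x y
    calc |Real.sqrt t₂ * (deriv f (Real.sqrt t₂ * x) * deriv g (t₁ / Real.sqrt t₂ * x + Real.sqrt (t₃ - t₁ ^ 2 / t₂) * y)) + t₁ / Real.sqrt t₂ * (f (Real.sqrt t₂ * x) * deriv (deriv g) (t₁ / Real.sqrt t₂ * x + Real.sqrt (t₃ - t₁ ^ 2 / t₂) * y))|
        ≤ |Real.sqrt t₂ * (deriv f (Real.sqrt t₂ * x) * deriv g (t₁ / Real.sqrt t₂ * x + Real.sqrt (t₃ - t₁ ^ 2 / t₂) * y))| + |t₁ / Real.sqrt t₂ * (f (Real.sqrt t₂ * x) * deriv (deriv g) (t₁ / Real.sqrt t₂ * x + Real.sqrt (t₃ - t₁ ^ 2 / t₂) * y))| := abs_add_le _ _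
      _ ≤ Real.sqrt t₂ * (Cf1 * Cg1) + |t₁ / Real.sqrt t₂| * (Cf0 * Cg2) := by
          have b1 : |Real.sqrt t₂ * (deriv f (Real.sqrt t₂ * x) * deriv g (t₁ / Real.sqrt t₂ * x + Real.sqrt (t₃ - t₁ ^ 2 / t₂) * y))| ≤ Real.sqrt t₂ * (Cf1 * Cg1) := by
            rw [abs_mul, abs_of_pos hA]
            exact mul_le_mul_of_nonneg_left (hJ'b x y) hA.le
          have b2 : |t₁ / Real.sqrt t₂ * (f (Real.sqrt t₂ * x) * deriv (deriv g) (t₁ / Real.sqrt t₂ * x + Real.sqrt (t₃ - t₁ ^ 2 / t₂) * y))| ≤ |t₁ / Real.sqrt t₂| * (Cf0 * Cg2) := by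
            rw [abs_mul]
            exact mul_le_mul_of_nonneg_left (hJ2b x y) (abs_nonneg _)
          exact add_le_add b1 b2
  -- continuity of all integrands
  have contArg : Continuous (fun z : ℝ × ℝ => t₁ / Real.sqrt t₂ * z.1 + Real.sqrt (t₃ - t₁ ^ 2 / t₂) * z.2) :=
    (continuous_const.mul continuous_fst).add (continuous_const.mul continuous_snd)
  have contψ : Continuous (fun z : ℝ × ℝ => f (Real.sqrt t₂ * z.1) * deriv g (t₁ / Real.sqrt t₂ * z.1 + Real.sqrt (t₃ - t₁ ^ 2 / t₂) * z.2)) :=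
    (hfc.comp (continuous_const.mul continuous_fst)).mul (hgc1.comp contArg)
  have contJ' : Continuous (fun z : ℝ × ℝ => deriv f (Real.sqrt t₂ * z.1) * deriv g (t₁ / Real.sqrt t₂ * z.1 + Real.sqrt (t₃ - t₁ ^ 2 / t₂) * z.2)) :=
    (hfc1.comp (continuous_const.mul continuous_fst)).mul (hgc1.comp contArg)
  have contJ2 : Continuous (fun z : ℝ × ℝ => f (Real.sqrt t₂ * z.1) * deriv (deriv g) (t₁ / Real.sqrt t₂ * z.1 + Real.sqrt (t₃ - t₁ ^ 2 / t₂) * z.2)) :=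
    (hfc.comp (continuous_const.mul continuous_fst)).mul (hgc2.comp contArg)
  have contψd : Continuous (fun z : ℝ × ℝ => Real.sqrt t₂ * (deriv f (Real.sqrt t₂ * z.1) * deriv g (t₁ / Real.sqrt t₂ * z.1 + Real.sqrt (t₃ - t₁ ^ 2 / t₂) * z.2)) + t₁ / Real.sqrt t₂ * (f (Real.sqrt t₂ * z.1) * deriv (deriv g) (t₁ / Real.sqrt t₂ * z.1 + Real.sqrt (t₃ - t₁ ^ 2 / t₂) * z.2))) :=
    (continuous_const.mul contJ').add (continuous_const.mul contJ2)
  -- integrability over the product measure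
  have intψ : Integrable (fun z : ℝ × ℝ => f (Real.sqrt t₂ * z.1) * deriv g (t₁ / Real.sqrt t₂ * z.1 + Real.sqrt (t₃ - t₁ ^ 2 / t₂) * z.2)) ((gaussianReal 0 1).prod (gaussianReal 0 1)) :=
    integrable_prob_bdd contψ.aestronglyMeasurable (fun z => hψb z.1 z.2)
  have intJ' : Integrable (fun z : ℝ × ℝ => deriv f (Real.sqrt t₂ * z.1) * deriv g (t₁ / Real.sqrt t₂ * z.1 + Real.sqrt (t₃ - t₁ ^ 2 / t₂) * z.2)) ((gaussianReal 0 1).prod (gaussianReal 0 1)) :=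
    integrable_prob_bdd contJ'.aestronglyMeasurable (fun z => hJ'b z.1 z.2)
  have intJ2 : Integrable (fun z : ℝ × ℝ => f (Real.sqrt t₂ * z.1) * deriv (deriv g) (t₁ / Real.sqrt t₂ * z.1 + Real.sqrt (t₃ - t₁ ^ 2 / t₂) * z.2)) ((gaussianReal 0 1).prod (gaussianReal 0 1)) :=
    integrable_prob_bdd contJ2.aestronglyMeasurable (fun z => hJ2b z.1 z.2)
  have intT1 : Integrable (fun z : ℝ × ℝ => z.1 * (f (Real.sqrt t₂ * z.1) * deriv g (t₁ / Real.sqrt t₂ * z.1 + Real.sqrt (t₃ - t₁ ^ 2 / t₂) * z.2))) ((gaussianReal 0 1).prod (gaussianReal 0 1)) := by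
    refine integrable_P_dom (continuous_fst.mul contψ).aestronglyMeasurable 0 (Cf0 * Cg1) 0
      (fun z => ?_)
    rw [abs_mul]
    have := mul_le_mul_of_nonneg_left (hψb z.1 z.2) (abs_nonneg z.1)
    nlinarith [abs_nonneg z.1, abs_nonneg z.2]
  have intT2 : Integrable (fun z : ℝ × ℝ => z.2 * (f (Real.sqrt t₂ * z.1) * deriv g (t₁ / Real.sqrt t₂ * z.1 + Real.sqrt (t₃ - t₁ ^ 2 / t₂) * z.2))) ((gaussianReal 0 1).prod (gaussianReal 0 1)) := by
    refine integrable_P_dom (continuous_snd.mul contψ).aestronglyMeasurable 0 0 (Cf0 * Cg1)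
      (fun z => ?_)
    rw [abs_mul]
    have := mul_le_mul_of_nonneg_left (hψb z.1 z.2) (abs_nonneg z.2)
    nlinarith [abs_nonneg z.1, abs_nonneg z.2]
  -- derivative of the inner integral (second dominated-convergence application)
  have hHd : ∀ x : ℝ, HasDerivAt
      (fun u : ℝ => ∫ y, f (Real.sqrt t₂ * u) * deriv g (t₁ / Real.sqrt t₂ * u + Real.sqrt (t₃ - t₁ ^ 2 / t₂) * y) ∂(gaussianReal 0 1))
      (∫ y, (Real.sqrt t₂ * (deriv f (Real.sqrt t₂ * x) * deriv g (t₁ / Real.sqrt t₂ * x + Real.sqrt (t₃ - t₁ ^ 2 / t₂) * y)) + t₁ / Real.sqrt t₂ * (f (Real.sqrt t₂ * x) * deriv (deriv g) (t₁ / Real.sqrt t₂ * x + Real.sqrt (t₃ - t₁ ^ 2 / t₂) * y))) ∂(gaussianReal 0 1)) x := by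
    intro x
    have key2 := hasDerivAt_integral_of_dominated_loc_of_deriv_le
      (μ := (gaussianReal 0 1)) (x₀ := x) (s := Metric.ball x 1)
      (F := fun u (y : ℝ) => f (Real.sqrt t₂ * u) * deriv g (t₁ / Real.sqrt t₂ * u + Real.sqrt (t₃ - t₁ ^ 2 / t₂) * y))
      (F' := fun u (y : ℝ) => Real.sqrt t₂ * (deriv f (Real.sqrt t₂ * u) * deriv g (t₁ / Real.sqrt t₂ * u + Real.sqrt (t₃ - t₁ ^ 2 / t₂) * y)) + t₁ / Real.sqrt t₂ * (f (Real.sqrt t₂ * u) * deriv (deriv g) (t₁ / Real.sqrt t₂ * u + Real.sqrt (t₃ - t₁ ^ 2 / t₂) * y)))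
      (bound := fun _ : ℝ => Real.sqrt t₂ * (Cf1 * Cg1) + |t₁ / Real.sqrt t₂| * (Cf0 * Cg2))
      (Metric.ball_mem_nhds x one_pos)
      (Filter.Eventually.of_forall fun u => Continuous.aestronglyMeasurable
        (continuous_const.mul (hgc1.comp (continuous_const.add
          (continuous_const.mul continuous_id)))))
      (integrable_prob_bdd (Continuous.aestronglyMeasurable
        (continuous_const.mul (hgc1.comp (continuous_const.add
          (continuous_const.mul continuous_id))))) (fun y => hψb x y))
      (Continuous.aestronglyMeasurable
        ((continuous_const.mul (continuous_const.mul (hgc1.comp (continuous_const.add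
          (continuous_const.mul continuous_id))))).add
         (continuous_const.mul (continuous_const.mul (hgc2.comp (continuous_const.add
          (continuous_const.mul continuous_id)))))))
      (Filter.Eventually.of_forall fun y u _ => by
        rw [Real.norm_eq_abs]; exact hψdb u y)
      (integrable_const _)
      (Filter.Eventually.of_forall fun y u _ => by
        have h1 : HasDerivAt (fun u : ℝ => f (Real.sqrt t₂ * u)) (deriv f (Real.sqrt t₂ * u) * (Real.sqrt t₂ * 1)) u :=
          ((hfd (Real.sqrt t₂ * u)).hasDerivAt).comp u ((hasDerivAt_id u).const_mul (Real.sqrt t₂))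
        have harg : HasDerivAt (fun u : ℝ => t₁ / Real.sqrt t₂ * u + Real.sqrt (t₃ - t₁ ^ 2 / t₂) * y) (t₁ / Real.sqrt t₂ * 1) u :=
          (((hasDerivAt_id u).const_mul (t₁ / Real.sqrt t₂)).add_const (Real.sqrt (t₃ - t₁ ^ 2 / t₂) * y))
        have h2 : HasDerivAt (fun u : ℝ => deriv g (t₁ / Real.sqrt t₂ * u + Real.sqrt (t₃ - t₁ ^ 2 / t₂) * y))
            (deriv (deriv g) (t₁ / Real.sqrt t₂ * u + Real.sqrt (t₃ - t₁ ^ 2 / t₂) * y) * (t₁ / Real.sqrt t₂ * 1)) u :=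
          by have hc := ((hgd' (t₁ / Real.sqrt t₂ * u + Real.sqrt (t₃ - t₁ ^ 2 / t₂) * y)).hasDerivAt).comp u harg; exact hc
        have h3 := h1.mul h2
        refine h3.congr_deriv ?_
        ring)
    exact key2.2
  have hHb : ∀ x : ℝ, |∫ y, f (Real.sqrt t₂ * x) * deriv g (t₁ / Real.sqrt t₂ * x + Real.sqrt (t₃ - t₁ ^ 2 / t₂) * y) ∂(gaussianReal 0 1)| ≤ Cf0 * Cg1 :=
    fun x => abs_integral_le_prob (fun y => hψb x y)
  have hH'b : ∀ x : ℝ, |∫ y, (Real.sqrt t₂ * (deriv f (Real.sqrt t₂ * x) * deriv g (t₁ / Real.sqrt t₂ * x + Real.sqrt (t₃ - t₁ ^ 2 / t₂) * y)) + t₁ / Real.sqrt t₂ * (f (Real.sqrt t₂ * x) * deriv (deriv g) (t₁ / Real.sqrt t₂ * x + Real.sqrt (t₃ - t₁ ^ 2 / t₂) * y))) ∂(gaussianReal 0 1)| ≤ Real.sqrt t₂ * (Cf1 * Cg1) + |t₁ / Real.sqrt t₂| * (Cf0 * Cg2) :=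
    fun x => abs_integral_le_prob (fun y => hψdb x y)
  have hH'm : AEStronglyMeasurable (fun x : ℝ => ∫ y, (Real.sqrt t₂ * (deriv f (Real.sqrt t₂ * x) * deriv g (t₁ / Real.sqrt t₂ * x + Real.sqrt (t₃ - t₁ ^ 2 / t₂) * y)) + t₁ / Real.sqrt t₂ * (f (Real.sqrt t₂ * x) * deriv (deriv g) (t₁ / Real.sqrt t₂ * x + Real.sqrt (t₃ - t₁ ^ 2 / t₂) * y))) ∂(gaussianReal 0 1)) volume := by
    have := (contψd.stronglyMeasurable.integral_prod_right'
      (ν := (gaussianReal 0 1))).aestronglyMeasurable (μ := volume)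
    exact this
  have steinT1 : ∫ x, x * ∫ y, f (Real.sqrt t₂ * x) * deriv g (t₁ / Real.sqrt t₂ * x + Real.sqrt (t₃ - t₁ ^ 2 / t₂) * y) ∂(gaussianReal 0 1) ∂(gaussianReal 0 1) =
      ∫ x, (∫ y, (Real.sqrt t₂ * (deriv f (Real.sqrt t₂ * x) * deriv g (t₁ / Real.sqrt t₂ * x + Real.sqrt (t₃ - t₁ ^ 2 / t₂) * y)) + t₁ / Real.sqrt t₂ * (f (Real.sqrt t₂ * x) * deriv (deriv g) (t₁ / Real.sqrt t₂ * x + Real.sqrt (t₃ - t₁ ^ 2 / t₂) * y))) ∂(gaussianReal 0 1)) ∂(gaussianReal 0 1) :=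
    stein (h := fun x => ∫ y, f (Real.sqrt t₂ * x) * deriv g (t₁ / Real.sqrt t₂ * x + Real.sqrt (t₃ - t₁ ^ 2 / t₂) * y) ∂(gaussianReal 0 1))
      (h' := fun x => ∫ y, (Real.sqrt t₂ * (deriv f (Real.sqrt t₂ * x) * deriv g (t₁ / Real.sqrt t₂ * x + Real.sqrt (t₃ - t₁ ^ 2 / t₂) * y)) + t₁ / Real.sqrt t₂ * (f (Real.sqrt t₂ * x) * deriv (deriv g) (t₁ / Real.sqrt t₂ * x + Real.sqrt (t₃ - t₁ ^ 2 / t₂) * y))) ∂(gaussianReal 0 1)) hH'm hHd hHb hH'b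
  -- T1 computation
  have hT1 : ∫ z, z.1 * (f (Real.sqrt t₂ * z.1) * deriv g (t₁ / Real.sqrt t₂ * z.1 + Real.sqrt (t₃ - t₁ ^ 2 / t₂) * z.2)) ∂((gaussianReal 0 1).prod (gaussianReal 0 1)) =
      Real.sqrt t₂ * (∫ z, deriv f (Real.sqrt t₂ * z.1) * deriv g (t₁ / Real.sqrt t₂ * z.1 + Real.sqrt (t₃ - t₁ ^ 2 / t₂) * z.2) ∂((gaussianReal 0 1).prod (gaussianReal 0 1))) +
      t₁ / Real.sqrt t₂ * (∫ z, f (Real.sqrt t₂ * z.1) * deriv (deriv g) (t₁ / Real.sqrt t₂ * z.1 + Real.sqrt (t₃ - t₁ ^ 2 / t₂) * z.2) ∂((gaussianReal 0 1).prod (gaussianReal 0 1))) := by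
    rw [integral_prod _ intT1]
    show (∫ x, ∫ y, x * (f (Real.sqrt t₂ * x) * deriv g (t₁ / Real.sqrt t₂ * x + Real.sqrt (t₃ - t₁ ^ 2 / t₂) * y)) ∂(gaussianReal 0 1) ∂(gaussianReal 0 1)) = _
    have epull : ∀ x : ℝ, (∫ y, x * (f (Real.sqrt t₂ * x) * deriv g (t₁ / Real.sqrt t₂ * x + Real.sqrt (t₃ - t₁ ^ 2 / t₂) * y)) ∂(gaussianReal 0 1)) = x * ∫ y, f (Real.sqrt t₂ * x) * deriv g (t₁ / Real.sqrt t₂ * x + Real.sqrt (t₃ - t₁ ^ 2 / t₂) * y) ∂(gaussianReal 0 1) :=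
      fun x => integral_const_mul x _
    simp_rw [epull]
    rw [steinT1]
    have hun : Integrable (Function.uncurry fun x y => (Real.sqrt t₂ * (deriv f (Real.sqrt t₂ * x) * deriv g (t₁ / Real.sqrt t₂ * x + Real.sqrt (t₃ - t₁ ^ 2 / t₂) * y)) + t₁ / Real.sqrt t₂ * (f (Real.sqrt t₂ * x) * deriv (deriv g) (t₁ / Real.sqrt t₂ * x + Real.sqrt (t₃ - t₁ ^ 2 / t₂) * y)))) ((gaussianReal 0 1).prod (gaussianReal 0 1)) := by
      exact (intJ'.const_mul (Real.sqrt t₂)).add (intJ2.const_mul (t₁ / Real.sqrt t₂))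
    rw [integral_integral hun]
    show (∫ z : ℝ × ℝ, (Real.sqrt t₂ * (deriv f (Real.sqrt t₂ * z.1) * deriv g (t₁ / Real.sqrt t₂ * z.1 + Real.sqrt (t₃ - t₁ ^ 2 / t₂) * z.2)) + t₁ / Real.sqrt t₂ * (f (Real.sqrt t₂ * z.1) * deriv (deriv g) (t₁ / Real.sqrt t₂ * z.1 + Real.sqrt (t₃ - t₁ ^ 2 / t₂) * z.2))) ∂((gaussianReal 0 1).prod (gaussianReal 0 1))) = _
    rw [integral_add (intJ'.const_mul (Real.sqrt t₂)) (intJ2.const_mul (t₁ / Real.sqrt t₂)),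
      integral_const_mul, integral_const_mul]
  -- T2 computation
  have hT2 : ∫ z, z.2 * (f (Real.sqrt t₂ * z.1) * deriv g (t₁ / Real.sqrt t₂ * z.1 + Real.sqrt (t₃ - t₁ ^ 2 / t₂) * z.2)) ∂((gaussianReal 0 1).prod (gaussianReal 0 1)) =
      Real.sqrt (t₃ - t₁ ^ 2 / t₂) * (∫ z, f (Real.sqrt t₂ * z.1) * deriv (deriv g) (t₁ / Real.sqrt t₂ * z.1 + Real.sqrt (t₃ - t₁ ^ 2 / t₂) * z.2) ∂((gaussianReal 0 1).prod (gaussianReal 0 1))) := by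
    rw [integral_prod _ intT2]
    show (∫ x, ∫ y, y * (f (Real.sqrt t₂ * x) * deriv g (t₁ / Real.sqrt t₂ * x + Real.sqrt (t₃ - t₁ ^ 2 / t₂) * y)) ∂(gaussianReal 0 1) ∂(gaussianReal 0 1)) = _
    have inner : ∀ x : ℝ, (∫ y, y * (f (Real.sqrt t₂ * x) * deriv g (t₁ / Real.sqrt t₂ * x + Real.sqrt (t₃ - t₁ ^ 2 / t₂) * y)) ∂(gaussianReal 0 1)) =
        ∫ y, f (Real.sqrt t₂ * x) * (deriv (deriv g) (t₁ / Real.sqrt t₂ * x + Real.sqrt (t₃ - t₁ ^ 2 / t₂) * y) * Real.sqrt (t₃ - t₁ ^ 2 / t₂)) ∂(gaussianReal 0 1) := by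
      intro x
      refine stein (h := fun y => f (Real.sqrt t₂ * x) * deriv g (t₁ / Real.sqrt t₂ * x + Real.sqrt (t₃ - t₁ ^ 2 / t₂) * y))
        (h' := fun y => f (Real.sqrt t₂ * x) * (deriv (deriv g) (t₁ / Real.sqrt t₂ * x + Real.sqrt (t₃ - t₁ ^ 2 / t₂) * y) * Real.sqrt (t₃ - t₁ ^ 2 / t₂)))
        (Continuous.aestronglyMeasurable (continuous_const.mul
          ((hgc2.comp (continuous_const.add (continuous_const.mul continuous_id))).mul
            continuous_const)))
        (fun y => ?_) (C := Cf0 * Cg1) (fun y => hψb x y) (C' := Cf0 * (Cg2 * Real.sqrt (t₃ - t₁ ^ 2 / t₂)))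
        (fun y => ?_)
      · have harg : HasDerivAt (fun y : ℝ => t₁ / Real.sqrt t₂ * x + Real.sqrt (t₃ - t₁ ^ 2 / t₂) * y) (Real.sqrt (t₃ - t₁ ^ 2 / t₂) * 1) y :=
          ((hasDerivAt_id y).const_mul (Real.sqrt (t₃ - t₁ ^ 2 / t₂))).const_add (t₁ / Real.sqrt t₂ * x)
        have h2 : HasDerivAt (fun y : ℝ => deriv g (t₁ / Real.sqrt t₂ * x + Real.sqrt (t₃ - t₁ ^ 2 / t₂) * y))
            (deriv (deriv g) (t₁ / Real.sqrt t₂ * x + Real.sqrt (t₃ - t₁ ^ 2 / t₂) * y) * (Real.sqrt (t₃ - t₁ ^ 2 / t₂) * 1)) y :=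
          by have hc := ((hgd' (t₁ / Real.sqrt t₂ * x + Real.sqrt (t₃ - t₁ ^ 2 / t₂) * y)).hasDerivAt).comp y harg; exact hc
        have h3 := h2.const_mul (f (Real.sqrt t₂ * x))
        simpa using h3
      · rw [abs_mul, abs_mul]
        refine mul_le_mul (hf0 _) ?_ (mul_nonneg (abs_nonneg _) (abs_nonneg _)) hCf0
        rw [abs_of_pos hCc]
        exact mul_le_mul_of_nonneg_right (hg2 _) hCc.le
    simp_rw [inner]
    have hun2 : Integrable
        (Function.uncurry fun x y => f (Real.sqrt t₂ * x) * (deriv (deriv g) (t₁ / Real.sqrt t₂ * x + Real.sqrt (t₃ - t₁ ^ 2 / t₂) * y) * Real.sqrt (t₃ - t₁ ^ 2 / t₂)))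
        ((gaussianReal 0 1).prod (gaussianReal 0 1)) := by
      refine (intJ2.const_mul (Real.sqrt (t₃ - t₁ ^ 2 / t₂))).congr (Filter.Eventually.of_forall fun z => ?_)
      simp only [Function.uncurry_def]
      ring
    rw [integral_integral hun2]
    show (∫ z : ℝ × ℝ, f (Real.sqrt t₂ * z.1) * (deriv (deriv g) (t₁ / Real.sqrt t₂ * z.1 + Real.sqrt (t₃ - t₁ ^ 2 / t₂) * z.2) * Real.sqrt (t₃ - t₁ ^ 2 / t₂)) ∂((gaussianReal 0 1).prod (gaussianReal 0 1))) = _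
    have e : (fun z : ℝ × ℝ => f (Real.sqrt t₂ * z.1) * (deriv (deriv g) (t₁ / Real.sqrt t₂ * z.1 + Real.sqrt (t₃ - t₁ ^ 2 / t₂) * z.2) * Real.sqrt (t₃ - t₁ ^ 2 / t₂))) =
        fun z : ℝ × ℝ => Real.sqrt (t₃ - t₁ ^ 2 / t₂) * (f (Real.sqrt t₂ * z.1) * deriv (deriv g) (t₁ / Real.sqrt t₂ * z.1 + Real.sqrt (t₃ - t₁ ^ 2 / t₂) * z.2)) := by
      funext z
      ring
    rw [e, integral_const_mul]
  -- splitting the derivative integrand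
  have hsplit : ∫ z, (f (Real.sqrt t₂ * z.1) *
      (deriv g (t₁ / Real.sqrt t₂ * z.1 + Real.sqrt (t₃ - t₁ ^ 2 / t₂) * z.2) *
        (1 / Real.sqrt t₂ * z.1 + -t₁ / (t₂ * Real.sqrt (t₃ - t₁ ^ 2 / t₂)) * z.2))) ∂((gaussianReal 0 1).prod (gaussianReal 0 1)) =
      1 / Real.sqrt t₂ * (∫ z, z.1 * (f (Real.sqrt t₂ * z.1) * deriv g (t₁ / Real.sqrt t₂ * z.1 + Real.sqrt (t₃ - t₁ ^ 2 / t₂) * z.2)) ∂((gaussianReal 0 1).prod (gaussianReal 0 1))) +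
      -t₁ / (t₂ * Real.sqrt (t₃ - t₁ ^ 2 / t₂)) * (∫ z, z.2 * (f (Real.sqrt t₂ * z.1) * deriv g (t₁ / Real.sqrt t₂ * z.1 + Real.sqrt (t₃ - t₁ ^ 2 / t₂) * z.2)) ∂((gaussianReal 0 1).prod (gaussianReal 0 1))) := by
    have e : (fun z : ℝ × ℝ => f (Real.sqrt t₂ * z.1) *
        (deriv g (t₁ / Real.sqrt t₂ * z.1 + Real.sqrt (t₃ - t₁ ^ 2 / t₂) * z.2) *
          (1 / Real.sqrt t₂ * z.1 + -t₁ / (t₂ * Real.sqrt (t₃ - t₁ ^ 2 / t₂)) * z.2))) =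
        fun z : ℝ × ℝ => 1 / Real.sqrt t₂ * (z.1 * (f (Real.sqrt t₂ * z.1) * deriv g (t₁ / Real.sqrt t₂ * z.1 + Real.sqrt (t₃ - t₁ ^ 2 / t₂) * z.2))) +
          -t₁ / (t₂ * Real.sqrt (t₃ - t₁ ^ 2 / t₂)) * (z.2 * (f (Real.sqrt t₂ * z.1) * deriv g (t₁ / Real.sqrt t₂ * z.1 + Real.sqrt (t₃ - t₁ ^ 2 / t₂) * z.2))) := by
      funext z
      ring
    rw [e, integral_add (intT1.const_mul _) (intT2.const_mul _),
      integral_const_mul, integral_const_mul]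
  -- algebraic assembly
  have h22 : Real.sqrt t₂ * Real.sqrt t₂ = t₂ := Real.mul_self_sqrt h₂.le
  have hCcne : Real.sqrt (t₃ - t₁ ^ 2 / t₂) ≠ 0 := ne_of_gt hCc
  have hAne : Real.sqrt t₂ ≠ 0 := ne_of_gt hA
  have halg : ∀ J' J2 : ℝ,
      1 / Real.sqrt t₂ * (Real.sqrt t₂ * J' + t₁ / Real.sqrt t₂ * J2) + -t₁ / (t₂ * Real.sqrt (t₃ - t₁ ^ 2 / t₂)) * (Real.sqrt (t₃ - t₁ ^ 2 / t₂) * J2) = J' := by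
    intro J' J2
    have hinv : Real.sqrt (t₃ - t₁ ^ 2 / t₂) * (t₂ * Real.sqrt (t₃ - t₁ ^ 2 / t₂))⁻¹ = t₂⁻¹ := by
      rw [mul_inv]
      calc Real.sqrt (t₃ - t₁ ^ 2 / t₂) * (t₂⁻¹ * (Real.sqrt (t₃ - t₁ ^ 2 / t₂))⁻¹) = (Real.sqrt (t₃ - t₁ ^ 2 / t₂) * (Real.sqrt (t₃ - t₁ ^ 2 / t₂))⁻¹) * t₂⁻¹ := by ring
        _ = t₂⁻¹ := by rw [mul_inv_cancel₀ hCcne, one_mul]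
    have e1 : -t₁ / (t₂ * Real.sqrt (t₃ - t₁ ^ 2 / t₂)) * (Real.sqrt (t₃ - t₁ ^ 2 / t₂) * J2) = -(t₁ * J2) * t₂⁻¹ := by
      rw [show -t₁ / (t₂ * Real.sqrt (t₃ - t₁ ^ 2 / t₂)) * (Real.sqrt (t₃ - t₁ ^ 2 / t₂) * J2) = -(t₁ * J2) * (Real.sqrt (t₃ - t₁ ^ 2 / t₂) * (t₂ * Real.sqrt (t₃ - t₁ ^ 2 / t₂))⁻¹) from by ring,
        hinv]
    have hAinv : (1 : ℝ) / Real.sqrt t₂ * Real.sqrt t₂ = 1 := by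
      rw [one_div, inv_mul_cancel₀ hAne]
    have e2 : 1 / Real.sqrt t₂ * (Real.sqrt t₂ * J' + t₁ / Real.sqrt t₂ * J2) = J' + t₁ * J2 * t₂⁻¹ := by
      calc 1 / Real.sqrt t₂ * (Real.sqrt t₂ * J' + t₁ / Real.sqrt t₂ * J2)
          = (1 / Real.sqrt t₂ * Real.sqrt t₂) * J' + t₁ * J2 * ((Real.sqrt t₂ * Real.sqrt t₂)⁻¹) := by
            rw [mul_inv]
            ring
        _ = J' + t₁ * J2 * t₂⁻¹ := by rw [hAinv, h22, one_mul]
    rw [e1, e2]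
    ring
  -- final value identification
  have hval : ∫ z, (f (Real.sqrt t₂ * z.1) *
      (deriv g (t₁ / Real.sqrt t₂ * z.1 + Real.sqrt (t₃ - t₁ ^ 2 / t₂) * z.2) *
        (1 / Real.sqrt t₂ * z.1 + -t₁ / (t₂ * Real.sqrt (t₃ - t₁ ^ 2 / t₂)) * z.2))) ∂((gaussianReal 0 1).prod (gaussianReal 0 1)) =
      Egauss2 (fun x y => deriv f x * deriv g y) t₁ t₂ t₃ := by
    rw [hsplit, hT1, hT2, halg]
    simp only [Egauss2]
    rw [integral_prod _ intJ']
  -- final assembly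
  have hfun : ∀ t : ℝ, Egauss2 (fun x y => f x * g y) t t₂ t₃ =
      ∫ z, (f (Real.sqrt t₂ * z.1) *
        g (t / Real.sqrt t₂ * z.1 + Real.sqrt (t₃ - t ^ 2 / t₂) * z.2)) ∂((gaussianReal 0 1).prod (gaussianReal 0 1)) := by
    intro t
    simp only [Egauss2]
    rw [integral_prod _ (intF t)]
  have final : HasDerivAt (fun t => Egauss2 (fun x y => f x * g y) t t₂ t₃)
      (∫ z, (f (Real.sqrt t₂ * z.1) *
        (deriv g (t₁ / Real.sqrt t₂ * z.1 + Real.sqrt (t₃ - t₁ ^ 2 / t₂) * z.2) *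
          (1 / Real.sqrt t₂ * z.1 + -t₁ / (t₂ * Real.sqrt (t₃ - t₁ ^ 2 / t₂)) * z.2))) ∂((gaussianReal 0 1).prod (gaussianReal 0 1))) t₁ := by
    refine HasDerivAt.congr_of_eventuallyEq ?_ (Filter.Eventually.of_forall fun t => hfun t)
    exact hDer
  rw [← hval]
  exact final
end

section
/- Let (X,Y) be a centered bivariate Gaussian vector and f, g : ℝ → ℝ be C² functions, bounded with two bounded derivatives. Then ∂/∂Var(X) E[f(X)g(Y)] = (1/2) E[f''(X)g(Y)], with the covariance and Var(Y) held fixed. -/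
open MeasureTheory ProbabilityTheory Real Filter Metric
open scoped NNReal ENNReal

lemma intble_of_bdd {α : Type*} [MeasurableSpace α] {μ : Measure α} [IsFiniteMeasure μ] {h : α → ℝ}
    (hm : AEStronglyMeasurable h μ) {C : ℝ} (hC : ∀ x, |h x| ≤ C) : Integrable h μ :=
  (integrable_const C).mono' hm (ae_of_all _ fun x => by simpa [Real.norm_eq_abs] using hC x)

lemma gauss_density_eq (h : ℝ → ℝ) :
    ∫ x, h x ∂(gaussianReal 0 1) = ∫ x, gaussianPDFReal 0 1 x * h x := by
  rw [gaussianReal_of_var_ne_zero 0 one_ne_zero]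
  have : (gaussianPDF 0 1) = fun x => ((Real.toNNReal (gaussianPDFReal 0 1 x) : ℝ≥0) : ℝ≥0∞) := rfl
  rw [this, integral_withDensity_eq_integral_smul ((measurable_gaussianPDFReal 0 1).real_toNNReal) h]
  congr 1; ext x
  simp [NNReal.smul_def, Real.coe_toNNReal _ (gaussianPDFReal_nonneg 0 1 x)]

lemma pdf_cont : Continuous (gaussianPDFReal 0 1) := by
  unfold gaussianPDFReal; fun_prop

lemma pdf_deriv (x : ℝ) : HasDerivAt (gaussianPDFReal 0 1) (-x * gaussianPDFReal 0 1 x) x := by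
  unfold gaussianPDFReal
  have h1 : HasDerivAt (fun x : ℝ => -(x - 0) ^ 2 / (2 * (1:ℝ≥0))) (-x) x := by
    have : HasDerivAt (fun x : ℝ => -(x - 0) ^ 2 / (2 * (1:ℝ≥0))) ((-(2 * (x - 0) * 1)) / (2 * (1:ℝ≥0))) x := by
      have hx : HasDerivAt (fun x : ℝ => (x - 0) ^ 2) (2 * (x - 0) * 1) x := by
        simpa using hasDerivAt_pow 2 x
      simpa using (hx.neg.div_const _)
    convert this using 1
    push_cast; ring
  have h2 := (h1.exp).const_mul ((Real.sqrt (2 * π * (1:ℝ≥0)))⁻¹)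
  exact h2.congr_deriv (by ring)

lemma integrable_abs_mul_pdf : Integrable (fun x => |x| * gaussianPDFReal 0 1 x) := by
  have h := (integrable_mul_exp_neg_mul_sq (b := (1:ℝ)/2) (by norm_num)).abs
  have h2 := h.const_mul ((Real.sqrt (2 * π * (1:ℝ≥0)))⁻¹)
  apply h2.congr
  filter_upwards with x
  unfold gaussianPDFReal
  rw [abs_mul, abs_of_pos (Real.exp_pos _)]
  rw [show -(x - 0) ^ 2 / (2 * ((1:ℝ≥0):ℝ)) = -(1/2 * x^2) by push_cast; ring]
  ring

lemma integrable_abs_gauss : Integrable (fun x => |x|) (gaussianReal 0 1) := by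
  rw [gaussianReal_of_var_ne_zero 0 one_ne_zero]
  have : (gaussianPDF 0 1) = fun x => ((Real.toNNReal (gaussianPDFReal 0 1 x) : ℝ≥0) : ℝ≥0∞) := rfl
  rw [this, integrable_withDensity_iff_integrable_smul ((measurable_gaussianPDFReal 0 1).real_toNNReal)]
  apply integrable_abs_mul_pdf.congr
  filter_upwards with x
  simp [NNReal.smul_def, Real.coe_toNNReal _ (gaussianPDFReal_nonneg 0 1 x), mul_comm]

lemma gauss_ibp {h h' : ℝ → ℝ} (hd : ∀ x, HasDerivAt h (h' x) x)
    (hc' : Continuous h') {C C' : ℝ} (hb : ∀ x, |h x| ≤ C) (hb' : ∀ x, |h' x| ≤ C') :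
    ∫ x, x * h x ∂(gaussianReal 0 1) = ∫ x, h' x ∂(gaussianReal 0 1) := by
  have hc : Continuous h := by
    rw [continuous_iff_continuousAt]; exact fun x => (hd x).continuousAt
  have hC : 0 ≤ C := (abs_nonneg _).trans (hb 0)
  have hC' : 0 ≤ C' := (abs_nonneg _).trans (hb' 0)
  set φ := gaussianPDFReal 0 1 with hφ
  have huv' : Integrable (h * fun x => -x * φ x) := by
    apply (integrable_abs_mul_pdf.const_mul C).mono'
      (hc.mul (continuous_id.neg.mul pdf_cont)).aestronglyMeasurable
    filter_upwards with x
    simp only [Pi.mul_apply, Real.norm_eq_abs, abs_mul, abs_neg, Pi.neg_apply,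
      abs_of_nonneg (gaussianPDFReal_nonneg 0 1 x), id_eq]
    exact mul_le_mul_of_nonneg_right (hb x) (mul_nonneg (abs_nonneg _) (gaussianPDFReal_nonneg 0 1 x))
  have hu'v : Integrable (h' * φ) := by
    apply ((integrable_gaussianPDFReal 0 1).const_mul C').mono'
      (hc'.mul pdf_cont).aestronglyMeasurable
    filter_upwards with x
    simp only [Pi.mul_apply, Real.norm_eq_abs, abs_mul]
    rw [abs_of_nonneg (gaussianPDFReal_nonneg 0 1 x)]
    exact mul_le_mul_of_nonneg_right (hb' x) (gaussianPDFReal_nonneg 0 1 x)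
  have huv : Integrable (h * φ) := by
    apply ((integrable_gaussianPDFReal 0 1).const_mul C).mono'
      (hc.mul pdf_cont).aestronglyMeasurable
    filter_upwards with x
    simp only [Pi.mul_apply, Real.norm_eq_abs, abs_mul]
    rw [abs_of_nonneg (gaussianPDFReal_nonneg 0 1 x)]
    exact mul_le_mul_of_nonneg_right (hb x) (gaussianPDFReal_nonneg 0 1 x)
  have key := integral_mul_deriv_eq_deriv_mul_of_integrable (fun x _ => hd x) (fun x _ => pdf_deriv x) huv' hu'v huv
  rw [gauss_density_eq, gauss_density_eq]
  have l1 : ∫ x, φ x * (x * h x) = - ∫ x, h x * (-x * φ x) := by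
    rw [← integral_neg]; congr 1; ext x; ring
  rw [l1, key, neg_neg]
  congr 1; ext x; ring

section Gop

noncomputable def Gop (A B : ℝ) (k : ℝ → ℝ) (w : ℝ) : ℝ :=
  ∫ z₂, k (A * w + B * z₂) ∂(gaussianReal 0 1)

variable {A B : ℝ} {k k' : ℝ → ℝ} {C C' : ℝ}

lemma Gop_bound (hb : ∀ x, |k x| ≤ C) (w : ℝ) : |Gop A B k w| ≤ C := by
  have h := norm_integral_le_of_norm_le_const (μ := gaussianReal 0 1)
    (f := fun z₂ => k (A * w + B * z₂)) (C := C) (ae_of_all _ fun z₂ => by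
      simpa [Real.norm_eq_abs] using hb _)
  simpa [Gop, Real.norm_eq_abs] using h

lemma Gop_cont (hk : Continuous k) (hb : ∀ x, |k x| ≤ C) : Continuous (Gop A B k) := by
  apply continuous_of_dominated (bound := fun _ => C)
  · exact fun w => (hk.comp (by fun_prop : Continuous fun z₂ : ℝ => A * w + B * z₂)).aestronglyMeasurable
  · exact fun w => ae_of_all _ fun z₂ => by simpa [Real.norm_eq_abs] using hb _
  · exact integrable_const _
  · exact ae_of_all _ fun z₂ => hk.comp (by fun_prop)

lemma Gop_deriv (hd : ∀ x, HasDerivAt k (k' x) x) (hc' : Continuous k')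
    (hb : ∀ x, |k x| ≤ C) (hb' : ∀ x, |k' x| ≤ C') (w : ℝ) :
    HasDerivAt (Gop A B k) (A * Gop A B k' w) w := by
  have hk : Continuous k := by
    rw [continuous_iff_continuousAt]; exact fun x => (hd x).continuousAt
  have hC' : 0 ≤ C' := (abs_nonneg _).trans (hb' 0)
  have main := hasDerivAt_integral_of_dominated_loc_of_deriv_le
    (F := fun w z₂ => k (A * w + B * z₂)) (F' := fun w z₂ => A * k' (A * w + B * z₂))
    (μ := gaussianReal 0 1) (x₀ := w) (bound := fun _ => |A| * C') (s := ball w 1) (ball_mem_nhds w one_pos)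
    (Filter.Eventually.of_forall fun x =>
      (hk.comp ((continuous_const.mul continuous_const).add
        (continuous_const.mul continuous_id))).aestronglyMeasurable)
    (intble_of_bdd (hk.comp ((continuous_const.mul continuous_const).add
        (continuous_const.mul continuous_id))).aestronglyMeasurable (fun z₂ => hb _))
    ((continuous_const.mul (hc'.comp ((continuous_const.mul continuous_const).add
        (continuous_const.mul continuous_id)))).aestronglyMeasurable)
    (ae_of_all _ fun z₂ x _ => by
      rw [Real.norm_eq_abs, abs_mul]
      exact mul_le_mul_of_nonneg_left (hb' _) (abs_nonneg A))
    (integrable_const _)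
    (ae_of_all _ fun z₂ x _ => by
      have hlin : HasDerivAt (fun u : ℝ => A * u + B * z₂) A x := by
        simpa using ((hasDerivAt_id x).const_mul A).add_const (B * z₂)
      have := (hd (A * x + B * z₂)).comp x hlin
      exact this.congr_deriv (mul_comm _ _))
  have h2 := main.2
  rwa [integral_const_mul] at h2

lemma Gop_inner_ibp (hd : ∀ x, HasDerivAt k (k' x) x) (hc' : Continuous k')
    (hb : ∀ x, |k x| ≤ C) (hb' : ∀ x, |k' x| ≤ C') (w : ℝ) :
    ∫ z₂, z₂ * k (A * w + B * z₂) ∂(gaussianReal 0 1) = B * Gop A B k' w := by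
  have key := gauss_ibp (h := fun z₂ => k (A * w + B * z₂))
    (h' := fun z₂ => B * k' (A * w + B * z₂))
    (fun z₂ => by
      have hlin : HasDerivAt (fun u : ℝ => A * w + B * u) B z₂ := by
        simpa using ((hasDerivAt_id z₂).const_mul B).const_add (A * w)
      exact ((hd (A * w + B * z₂)).comp z₂ hlin).congr_deriv (mul_comm _ _))
    (continuous_const.mul (hc'.comp ((continuous_const.mul continuous_const).add
        (continuous_const.mul continuous_id))))
    (C := C) (C' := |B| * C')
    (fun z₂ => hb _)
    (fun z₂ => by
      rw [abs_mul]; exact mul_le_mul_of_nonneg_left (hb' _) (abs_nonneg B))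
  rw [key, integral_const_mul]; rfl

end Gop

lemma integral_add3 {α : Type*} [MeasurableSpace α] {μ : Measure α} {f1 f2 f3 : α → ℝ}
    (h1 : Integrable f1 μ) (h2 : Integrable f2 μ) (h3 : Integrable f3 μ) :
    ∫ x, (f1 x + f2 x + f3 x) ∂μ = (∫ x, f1 x ∂μ) + (∫ x, f2 x ∂μ) + (∫ x, f3 x ∂μ) := by
  rw [integral_add (f := fun x => f1 x + f2 x) (g := f3) (h1.add h2) h3, integral_add h1 h2]

lemma outer_ibp {s A B : ℝ} (hs : 0 ≤ s) {p p' k k' : ℝ → ℝ} {Cp Cp' Ck Ck' : ℝ}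
    (hp : ∀ x, HasDerivAt p (p' x) x) (hpc' : Continuous p')
    (hkd : ∀ x, HasDerivAt k (k' x) x) (hkc' : Continuous k')
    (hbp : ∀ x, |p x| ≤ Cp) (hbp' : ∀ x, |p' x| ≤ Cp')
    (hbk : ∀ x, |k x| ≤ Ck) (hbk' : ∀ x, |k' x| ≤ Ck') :
    ∫ w, w * (p (s * w) * Gop A B k w) ∂(gaussianReal 0 1)
      = s * ∫ w, p' (s * w) * Gop A B k w ∂(gaussianReal 0 1)
        + A * ∫ w, p (s * w) * Gop A B k' w ∂(gaussianReal 0 1) := by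
  have hkc : Continuous k := by
    rw [continuous_iff_continuousAt]; exact fun x => (hkd x).continuousAt
  have hpc : Continuous p := by
    rw [continuous_iff_continuousAt]; exact fun x => (hp x).continuousAt
  have hCp : 0 ≤ Cp := (abs_nonneg _).trans (hbp 0)
  have hCp' : 0 ≤ Cp' := (abs_nonneg _).trans (hbp' 0)
  have hCk : 0 ≤ Ck := (abs_nonneg _).trans (hbk 0)
  have hCk' : 0 ≤ Ck' := (abs_nonneg _).trans (hbk' 0)
  have hGkc : Continuous (Gop A B k) := Gop_cont hkc hbk
  have hGk'c : Continuous (Gop A B k') := Gop_cont hkc' hbk'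
  have hder : ∀ w, HasDerivAt (fun w => p (s * w) * Gop A B k w)
      (p' (s * w) * s * Gop A B k w + p (s * w) * (A * Gop A B k' w)) w := by
    intro w
    have hlin : HasDerivAt (fun w : ℝ => s * w) s w := by
      simpa using (hasDerivAt_id w).const_mul s
    exact ((hp (s * w)).comp w hlin).mul (Gop_deriv hkd hkc' hbk hbk' w)
  have hcont' : Continuous fun w => p' (s * w) * s * Gop A B k w
      + p (s * w) * (A * Gop A B k' w) := by fun_prop
  have key := gauss_ibp hder hcont'
    (C := Cp * Ck) (C' := Cp' * s * Ck + Cp * (|A| * Ck'))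
    (fun w => by
      rw [abs_mul]
      exact mul_le_mul (hbp _) (Gop_bound hbk w) (abs_nonneg _) hCp)
    (fun w => by
      refine (abs_add_le _ _).trans (add_le_add ?_ ?_)
      · rw [abs_mul, abs_mul, abs_of_nonneg hs]
        exact mul_le_mul (mul_le_mul (hbp' _) le_rfl hs hCp') (Gop_bound hbk w)
          (abs_nonneg _) (mul_nonneg hCp' hs)
      · rw [abs_mul, abs_mul]
        exact mul_le_mul (hbp _) (mul_le_mul le_rfl (Gop_bound hbk' w) (abs_nonneg _)
          (abs_nonneg _)) (by positivity) hCp)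
  rw [key, integral_add]
  · congr 1
    · rw [← integral_const_mul]
      congr 1; ext w; ring
    · rw [← integral_const_mul]
      congr 1; ext w; ring
  · exact intble_of_bdd (Continuous.aestronglyMeasurable (by fun_prop)) (C := Cp' * s * Ck) (fun w => by
      rw [abs_mul, abs_mul, abs_of_nonneg hs]
      exact mul_le_mul (mul_le_mul (hbp' _) le_rfl hs hCp') (Gop_bound hbk w)
        (abs_nonneg _) (mul_nonneg hCp' hs))
  · exact intble_of_bdd (Continuous.aestronglyMeasurable (by fun_prop)) (C := Cp * (|A| * Ck')) (fun w => by
      rw [abs_mul, abs_mul]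
      exact mul_le_mul (hbp _) (mul_le_mul le_rfl (Gop_bound hbk' w) (abs_nonneg _)
        (abs_nonneg _)) (by positivity) hCp)

lemma scalar_id (t t₁ q w z1 z2 F1 Fv Gv G1 : ℝ) (hq : q ≠ 0) (hw : w ≠ 0) (ht : t ≠ 0) :
    z1 / (2 * q) * (F1 * Gv) + (-(t₁ * z1) / (2 * t * q) + t₁ ^ 2 * z2 / (2 * t ^ 2 * w)) * (Fv * G1)
    = F1 * (1 / (2 * q) * z1) * Gv
      + Fv * (G1 * (t₁ * (-(1 / (2 * q)) / t) * z1 + 1 / (2 * w) * -(t₁ ^ 2 * -(t ^ 2)⁻¹) * z2)) := by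
  field_simp

set_option maxHeartbeats 2000000 in
/-- For `(X,Y)` centered bivariate Gaussian and `f, g` bounded `C²` functions with bounded
derivatives, `∂/∂Var(X) E[f(X) g(Y)] = (1/2) E[f''(X) g(Y)]` (covariance and `Var Y` fixed). -/
theorem stmt10 (f g : ℝ → ℝ) (hf : ContDiff ℝ 2 f) (hg : ContDiff ℝ 2 g)
    (hfb : ∀ k ≤ 2, ∃ C, ∀ x, |iteratedDeriv k f x| ≤ C)
    (hgb : ∀ k ≤ 2, ∃ C, ∀ x, |iteratedDeriv k g x| ≤ C)
    (t₁ t₂ t₃ : ℝ) (h₂ : 0 < t₂) (h₃ : 0 < t₃) (h₁ : |t₁| < Real.sqrt (t₂ * t₃)) :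
    HasDerivAt (fun t => Egauss2 (fun x y => f x * g y) t₁ t t₃)
      (1 / 2 * Egauss2 (fun x y => deriv (deriv f) x * g y) t₁ t₂ t₃) t₂ := by
  -- bounds on iterated derivatives
  obtain ⟨Cf0, hCf0⟩ := hfb 0 (by norm_num)
  obtain ⟨Cf1, hCf1⟩ := hfb 1 (by norm_num)
  obtain ⟨Cf2, hCf2⟩ := hfb 2 le_rfl
  obtain ⟨Cg0, hCg0⟩ := hgb 0 (by norm_num)
  obtain ⟨Cg1, hCg1⟩ := hgb 1 (by norm_num)
  obtain ⟨Cg2, hCg2⟩ := hgb 2 le_rfl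
  rw [iteratedDeriv_zero] at hCf0 hCg0
  rw [iteratedDeriv_one] at hCf1 hCg1
  rw [show (2:ℕ) = 1 + 1 by norm_num, iteratedDeriv_succ, iteratedDeriv_one] at hCf2 hCg2
  -- differentiability facts
  have hf1 : ContDiff ℝ 1 (deriv f) :=
    (contDiff_succ_iff_deriv.mp (by exact_mod_cast hf : ContDiff ℝ (1 + 1) f)).2.2
  have hg1 : ContDiff ℝ 1 (deriv g) :=
    (contDiff_succ_iff_deriv.mp (by exact_mod_cast hg : ContDiff ℝ (1 + 1) g)).2.2
  have hfd : ∀ x, HasDerivAt f (deriv f x) x :=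
    fun x => ((hf.differentiable (by norm_num)) x).hasDerivAt
  have hgd : ∀ x, HasDerivAt g (deriv g x) x :=
    fun x => ((hg.differentiable (by norm_num)) x).hasDerivAt
  have hfd2 : ∀ x, HasDerivAt (deriv f) (deriv (deriv f) x) x :=
    fun x => ((hf1.differentiable one_ne_zero) x).hasDerivAt
  have hgd2 : ∀ x, HasDerivAt (deriv g) (deriv (deriv g) x) x :=
    fun x => ((hg1.differentiable one_ne_zero) x).hasDerivAt
  have hfc : Continuous f := hf.continuous
  have hgc : Continuous g := hg.continuous
  have hfc1 : Continuous (deriv f) := hf1.continuous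
  have hgc1 : Continuous (deriv g) := hg1.continuous
  have hfc2 : Continuous (deriv (deriv f)) :=
    ((contDiff_succ_iff_deriv.mp (by exact_mod_cast hf1 : ContDiff ℝ (0 + 1) (deriv f))).2.2).continuous
  have hgc2 : Continuous (deriv (deriv g)) :=
    ((contDiff_succ_iff_deriv.mp (by exact_mod_cast hg1 : ContDiff ℝ (0 + 1) (deriv g))).2.2).continuous
  have hCf0' : 0 ≤ Cf0 := (abs_nonneg _).trans (hCf0 0)
  have hCf1' : 0 ≤ Cf1 := (abs_nonneg _).trans (hCf1 0)
  have hCf2' : 0 ≤ Cf2 := (abs_nonneg _).trans (hCf2 0)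
  have hCg0' : 0 ≤ Cg0 := (abs_nonneg _).trans (hCg0 0)
  have hCg1' : 0 ≤ Cg1 := (abs_nonneg _).trans (hCg1 0)
  have hCg2' : 0 ≤ Cg2 := (abs_nonneg _).trans (hCg2 0)
  -- parameter facts
  have ht₁sq : t₁ ^ 2 < t₂ * t₃ := by
    nlinarith [Real.sq_sqrt (mul_nonneg h₂.le h₃.le), abs_nonneg t₁, sq_abs t₁,
      mul_self_lt_mul_self (abs_nonneg t₁) h₁]
  have hm : 0 < t₃ - t₁ ^ 2 / t₂ := by
    rw [sub_pos, div_lt_iff₀ h₂]; nlinarith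
  set ε : ℝ := (t₂ - t₁ ^ 2 / t₃) / 2 with hε_def
  have hεpos : 0 < ε := by
    rw [hε_def]; have : t₁ ^ 2 / t₃ < t₂ := by rw [div_lt_iff₀ h₃]; nlinarith
    linarith
  set r : ℝ := t₂ - ε with hr_def
  have hrpos : 0 < r := by
    rw [hr_def, hε_def]
    have h0 : 0 ≤ t₁ ^ 2 / t₃ := by positivity
    linarith
  have hrm : 0 < t₃ - t₁ ^ 2 / r := by
    rw [sub_pos, div_lt_iff₀ hrpos, hr_def, hε_def]
    have : t₁ ^ 2 / t₃ * t₃ = t₁ ^ 2 := by field_simp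
    nlinarith [div_nonneg (sq_nonneg t₁) h₃.le]
  have hball : ∀ t ∈ ball t₂ ε, r < t ∧ 0 < t ∧ 0 < t₃ - t₁ ^ 2 / t ∧
      t₃ - t₁ ^ 2 / r ≤ t₃ - t₁ ^ 2 / t := by
    intro t ht
    rw [mem_ball, Real.dist_eq, abs_lt] at ht
    have hrt : r < t := by rw [hr_def]; linarith [ht.1]
    have htpos : 0 < t := hrpos.trans hrt
    have hle : t₁ ^ 2 / t ≤ t₁ ^ 2 / r := div_le_div_of_nonneg_left (sq_nonneg t₁) hrpos hrt.le
    exact ⟨hrt, htpos, by linarith, by linarith⟩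
  -- setup constants
  have hstpos : 0 < Real.sqrt t₂ := Real.sqrt_pos.mpr h₂
  have hBpos : 0 < Real.sqrt (t₃ - t₁ ^ 2 / t₂) := Real.sqrt_pos.mpr hm
  have hsrpos : 0 < Real.sqrt r := Real.sqrt_pos.mpr hrpos
  have hsmpos : 0 < Real.sqrt (t₃ - t₁ ^ 2 / r) := Real.sqrt_pos.mpr hrm
  set Pm : Measure (ℝ × ℝ) := (gaussianReal 0 1).prod (gaussianReal 0 1) with hPm_def
  set Φ : ℝ → ℝ × ℝ → ℝ := fun t z =>
    f (Real.sqrt t * z.1) * g (t₁ / Real.sqrt t * z.1 + Real.sqrt (t₃ - t₁ ^ 2 / t) * z.2)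
    with hΦ_def
  set Φ' : ℝ → ℝ × ℝ → ℝ := fun t z =>
    z.1 / (2 * Real.sqrt t) *
      (deriv f (Real.sqrt t * z.1) *
        g (t₁ / Real.sqrt t * z.1 + Real.sqrt (t₃ - t₁ ^ 2 / t) * z.2))
    + (-(t₁ * z.1) / (2 * t * Real.sqrt t)
        + t₁ ^ 2 * z.2 / (2 * t ^ 2 * Real.sqrt (t₃ - t₁ ^ 2 / t))) *
      (f (Real.sqrt t * z.1) *
        deriv g (t₁ / Real.sqrt t * z.1 + Real.sqrt (t₃ - t₁ ^ 2 / t) * z.2))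
    with hΦ'_def
  have hΦcont : ∀ t, Continuous (Φ t) := by
    intro t
    apply Continuous.mul
    · exact hfc.comp (continuous_const.mul continuous_fst)
    · exact hgc.comp ((continuous_const.mul continuous_fst).add
        (continuous_const.mul continuous_snd))
  have hΦint : ∀ t, Integrable (Φ t) Pm := by
    intro t
    refine intble_of_bdd (hΦcont t).aestronglyMeasurable (C := Cf0 * Cg0) fun z => ?_
    rw [hΦ_def, abs_mul]
    exact mul_le_mul (hCf0 _) (hCg0 _) (abs_nonneg _) hCf0'
  have hΦ'cont : ∀ t, Continuous (Φ' t) := by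
    intro t
    apply Continuous.add
    · exact (continuous_fst.div_const _).mul
        ((hfc1.comp (continuous_const.mul continuous_fst)).mul
          (hgc.comp ((continuous_const.mul continuous_fst).add
            (continuous_const.mul continuous_snd))))
    · exact (((continuous_const.mul continuous_fst).neg.div_const _).add
          ((continuous_const.mul continuous_snd).div_const _)).mul
        ((hfc.comp (continuous_const.mul continuous_fst)).mul
          (hgc1.comp ((continuous_const.mul continuous_fst).add
            (continuous_const.mul continuous_snd))))
  have h_diff : ∀ z : ℝ × ℝ, ∀ t ∈ ball t₂ ε, HasDerivAt (fun t => Φ t z) (Φ' t z) t := by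
    intro z t ht
    obtain ⟨hrt, htpos, hu, hum⟩ := hball t ht
    have hsqt : 0 < Real.sqrt t := Real.sqrt_pos.mpr htpos
    have hsqu : 0 < Real.sqrt (t₃ - t₁ ^ 2 / t) := Real.sqrt_pos.mpr hu
    have hsq := Real.hasDerivAt_sqrt htpos.ne'
    have hfX := (hfd (Real.sqrt t * z.1)).comp t (hsq.mul_const z.1)
    have hA1 := ((hsq.inv hsqt.ne').const_mul t₁).mul_const z.1
    have hu0 : t₃ - t₁ ^ 2 * t⁻¹ ≠ 0 := by
      rw [← div_eq_mul_inv]; exact hu.ne'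
    have hud := ((hasDerivAt_inv htpos.ne').const_mul (t₁ ^ 2)).const_sub t₃
    have hB1 := ((Real.hasDerivAt_sqrt hu0).comp t hud).mul_const z.2
    have hgY := (hgd _).comp t (hA1.add hB1)
    have hprod := hfX.mul hgY
    have hfun : (fun t => Φ t z) = fun t =>
        f (Real.sqrt t * z.1) *
          g (t₁ * (Real.sqrt t)⁻¹ * z.1 + Real.sqrt (t₃ - t₁ ^ 2 * t⁻¹) * z.2) := by
      funext u; simp only [hΦ_def, div_eq_mul_inv]
    rw [hΦ'_def]
    simp only [hfun]
    refine hprod.congr_deriv (Eq.symm ?_)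
    simp only [Function.comp_apply]
    simp only [← div_eq_mul_inv]
    rw [Real.sq_sqrt htpos.le]
    exact scalar_id t t₁ (Real.sqrt t) (Real.sqrt (t₃ - t₁ ^ 2 / t)) z.1 z.2 _ _ _ _
      hsqt.ne' hsqu.ne' htpos.ne' 
  set K₁ : ℝ := Cf1 * Cg0 / (2 * Real.sqrt r) + |t₁| * (Cf0 * Cg1) / (2 * r * Real.sqrt r)
    with hK₁_def
  set K₂ : ℝ := t₁ ^ 2 * (Cf0 * Cg1) / (2 * r ^ 2 * Real.sqrt (t₃ - t₁ ^ 2 / r)) with hK₂_def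
  have h_bound : ∀ z : ℝ × ℝ, ∀ t ∈ ball t₂ ε, ‖Φ' t z‖ ≤ K₁ * |z.1| + K₂ * |z.2| := by
    intro z t ht
    obtain ⟨hrt, htpos, hu, hum⟩ := hball t ht
    have hsqt : 0 < Real.sqrt t := Real.sqrt_pos.mpr htpos
    have hsqu : 0 < Real.sqrt (t₃ - t₁ ^ 2 / t) := Real.sqrt_pos.mpr hu
    have hq : Real.sqrt r ≤ Real.sqrt t := Real.sqrt_le_sqrt hrt.le
    have hw : Real.sqrt (t₃ - t₁ ^ 2 / r) ≤ Real.sqrt (t₃ - t₁ ^ 2 / t) := Real.sqrt_le_sqrt hum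
    rw [Real.norm_eq_abs, hΦ'_def]
    have b1 : |z.1 / (2 * Real.sqrt t) *
        (deriv f (Real.sqrt t * z.1) *
          g (t₁ / Real.sqrt t * z.1 + Real.sqrt (t₃ - t₁ ^ 2 / t) * z.2))|
        ≤ Cf1 * Cg0 / (2 * Real.sqrt r) * |z.1| := by
      have ha : |z.1 / (2 * Real.sqrt t)| = |z.1| / (2 * Real.sqrt t) := by
        rw [abs_div, abs_of_pos (by linarith : (0:ℝ) < 2 * Real.sqrt t)]
      rw [abs_mul, ha, abs_mul]
      have e1 : |z.1| / (2 * Real.sqrt t) ≤ |z.1| / (2 * Real.sqrt r) :=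
        div_le_div_of_nonneg_left (abs_nonneg _) (by linarith) (by linarith)
      calc |z.1| / (2 * Real.sqrt t) * (|deriv f (Real.sqrt t * z.1)| * |g _|)
          ≤ |z.1| / (2 * Real.sqrt r) * (Cf1 * Cg0) := by
            apply mul_le_mul e1 (mul_le_mul (hCf1 _) (hCg0 _) (abs_nonneg _) hCf1')
              (mul_nonneg (abs_nonneg _) (abs_nonneg _)) (by positivity)
        _ = Cf1 * Cg0 / (2 * Real.sqrt r) * |z.1| := by ring
    have b2 : |(-(t₁ * z.1) / (2 * t * Real.sqrt t)
          + t₁ ^ 2 * z.2 / (2 * t ^ 2 * Real.sqrt (t₃ - t₁ ^ 2 / t))) *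
        (f (Real.sqrt t * z.1) *
          deriv g (t₁ / Real.sqrt t * z.1 + Real.sqrt (t₃ - t₁ ^ 2 / t) * z.2))|
        ≤ (|t₁| * (Cf0 * Cg1) / (2 * r * Real.sqrt r)) * |z.1|
          + (t₁ ^ 2 * (Cf0 * Cg1) / (2 * r ^ 2 * Real.sqrt (t₃ - t₁ ^ 2 / r))) * |z.2| := by
      rw [abs_mul]
      have hsum : |(-(t₁ * z.1) / (2 * t * Real.sqrt t)
            + t₁ ^ 2 * z.2 / (2 * t ^ 2 * Real.sqrt (t₃ - t₁ ^ 2 / t)))|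
          ≤ |t₁| * |z.1| / (2 * r * Real.sqrt r)
            + t₁ ^ 2 * |z.2| / (2 * r ^ 2 * Real.sqrt (t₃ - t₁ ^ 2 / r)) := by
        refine (abs_add_le _ _).trans (add_le_add ?_ ?_)
        · rw [abs_div, abs_neg, abs_mul,
            abs_of_pos (by positivity : (0:ℝ) < 2 * t * Real.sqrt t)]
          refine div_le_div_of_nonneg_left (by positivity)
            (mul_pos (mul_pos zero_lt_two hrpos) hsrpos) ?_
          exact mul_le_mul (by linarith) hq (Real.sqrt_nonneg _) (by linarith)
        · rw [abs_div, abs_mul, abs_of_pos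
            (by positivity : (0:ℝ) < 2 * t ^ 2 * Real.sqrt (t₃ - t₁ ^ 2 / t)), abs_pow, sq_abs]
          refine div_le_div_of_nonneg_left (by positivity)
            (mul_pos (mul_pos zero_lt_two (pow_pos hrpos 2)) hsmpos) ?_
          exact mul_le_mul (mul_le_mul_of_nonneg_left
              (pow_le_pow_left₀ hrpos.le hrt.le 2) (by norm_num)) hw
            (Real.sqrt_nonneg _) (by positivity)
      have hfg : |f (Real.sqrt t * z.1) *
          deriv g (t₁ / Real.sqrt t * z.1 + Real.sqrt (t₃ - t₁ ^ 2 / t) * z.2)| ≤ Cf0 * Cg1 := by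
        rw [abs_mul]; exact mul_le_mul (hCf0 _) (hCg1 _) (abs_nonneg _) hCf0'
      calc _ ≤ (|t₁| * |z.1| / (2 * r * Real.sqrt r)
            + t₁ ^ 2 * |z.2| / (2 * r ^ 2 * Real.sqrt (t₃ - t₁ ^ 2 / r))) * (Cf0 * Cg1) :=
          mul_le_mul hsum hfg (abs_nonneg _) (by positivity)
        _ = (|t₁| * (Cf0 * Cg1) / (2 * r * Real.sqrt r)) * |z.1|
            + (t₁ ^ 2 * (Cf0 * Cg1) / (2 * r ^ 2 * Real.sqrt (t₃ - t₁ ^ 2 / r))) * |z.2| := by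
          ring
    rw [hK₁_def, hK₂_def]
    calc _ ≤ _ := abs_add_le _ _
      _ ≤ _ := add_le_add b1 b2
      _ = (Cf1 * Cg0 / (2 * Real.sqrt r) + |t₁| * (Cf0 * Cg1) / (2 * r * Real.sqrt r)) * |z.1|
          + t₁ ^ 2 * (Cf0 * Cg1) / (2 * r ^ 2 * Real.sqrt (t₃ - t₁ ^ 2 / r)) * |z.2| := by ring
  have habs1 : Integrable (fun z : ℝ × ℝ => |z.1|) Pm := by
    have := integrable_abs_gauss.mul_prod (integrable_const (1 : ℝ))
      (ν := gaussianReal 0 1)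
    simpa using this
  have habs2 : Integrable (fun z : ℝ × ℝ => |z.2|) Pm := by
    have := (integrable_const (1 : ℝ)).mul_prod integrable_abs_gauss
      (μ := gaussianReal 0 1)
    simpa using this
  have hbound_int : Integrable (fun z : ℝ × ℝ => K₁ * |z.1| + K₂ * |z.2|) Pm :=
    (habs1.const_mul K₁).add (habs2.const_mul K₂)
  have main := hasDerivAt_integral_of_dominated_loc_of_deriv_le (μ := Pm) (x₀ := t₂)
    (F := Φ) (F' := Φ') (bound := fun z => K₁ * |z.1| + K₂ * |z.2|) (s := ball t₂ ε) (ball_mem_nhds t₂ hεpos)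
    (Filter.Eventually.of_forall fun t => (hΦcont t).aestronglyMeasurable)
    (hΦint t₂) ((hΦ'cont t₂).aestronglyMeasurable)
    (ae_of_all _ fun z t ht => h_bound z t ht) hbound_int
    (ae_of_all _ fun z t ht => h_diff z t ht)
  obtain ⟨hΦ'int, hder⟩ := main
  have hfun_eq : (fun t => Egauss2 (fun x y => f x * g y) t₁ t t₃)
      = fun t => ∫ z, Φ t z ∂Pm := by
    funext t
    rw [Egauss2, ← integral_integral (f := fun z₁ z₂ => Φ t (z₁, z₂)) (hΦint t)]
  have hval_eq : (∫ z, Φ' t₂ z ∂Pm)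
      = 1 / 2 * Egauss2 (fun x y => deriv (deriv f) x * g y) t₁ t₂ t₃ := by
    have hst2 : Real.sqrt t₂ * Real.sqrt t₂ = t₂ := Real.mul_self_sqrt h₂.le
    set s : ℝ := Real.sqrt t₂ with hs_def
    set A : ℝ := t₁ / s with hA_def
    set B : ℝ := Real.sqrt (t₃ - t₁ ^ 2 / t₂) with hB_def
    have hGg_cont : Continuous (Gop A B g) := Gop_cont hgc hCg0
    have hGg1_cont : Continuous (Gop A B (deriv g)) := Gop_cont hgc1 hCg1
    have hGg2_cont : Continuous (Gop A B (deriv (deriv g))) := Gop_cont hgc2 hCg2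
    -- step 1 : product to iterated integral
    rw [hPm_def, ← integral_integral (f := fun z₁ z₂ => Φ' t₂ (z₁, z₂))
      (by rw [← hPm_def]; exact hΦ'int)]
    -- step 2 : inner integral
    have inner : ∀ z₁, (∫ z₂, Φ' t₂ (z₁, z₂) ∂(gaussianReal 0 1)) =
        z₁ / (2 * s) * deriv f (s * z₁) * Gop A B g z₁
        + -(t₁ * z₁) / (2 * t₂ * s) * f (s * z₁) * Gop A B (deriv g) z₁
        + t₁ ^ 2 / (2 * t₂ ^ 2 * B) * f (s * z₁) * (B * Gop A B (deriv (deriv g)) z₁) := by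
      intro z₁
      have hsplit : (fun z₂ => Φ' t₂ (z₁, z₂)) = fun z₂ =>
          (z₁ / (2 * s) * deriv f (s * z₁)) * g (A * z₁ + B * z₂)
          + (-(t₁ * z₁) / (2 * t₂ * s) * f (s * z₁)) * deriv g (A * z₁ + B * z₂)
          + (t₁ ^ 2 / (2 * t₂ ^ 2 * B) * f (s * z₁))
            * (z₂ * deriv g (A * z₁ + B * z₂)) := by
        funext z₂
        simp only [hΦ'_def, hA_def, hs_def, hB_def]
        ring
      rw [hsplit]
      have hi1 : Integrable (fun z₂ => (z₁ / (2 * s) * deriv f (s * z₁))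
          * g (A * z₁ + B * z₂)) (gaussianReal 0 1) := by
        refine Integrable.const_mul (intble_of_bdd ?_ (C := Cg0) fun z₂ => hCg0 _) _
        exact (hgc.comp (continuous_const.add (continuous_const.mul continuous_id))).aestronglyMeasurable
      have hi2 : Integrable (fun z₂ => (-(t₁ * z₁) / (2 * t₂ * s) * f (s * z₁))
          * deriv g (A * z₁ + B * z₂)) (gaussianReal 0 1) := by
        refine Integrable.const_mul (intble_of_bdd ?_ (C := Cg1) fun z₂ => hCg1 _) _
        exact (hgc1.comp (continuous_const.add (continuous_const.mul continuous_id))).aestronglyMeasurable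
      have hi3 : Integrable (fun z₂ => (t₁ ^ 2 / (2 * t₂ ^ 2 * B) * f (s * z₁))
          * (z₂ * deriv g (A * z₁ + B * z₂))) (gaussianReal 0 1) := by
        refine Integrable.const_mul ?_ _
        refine (integrable_abs_gauss.const_mul Cg1).mono'
          ((continuous_id.mul (hgc1.comp (continuous_const.add
            (continuous_const.mul continuous_id)))).aestronglyMeasurable) ?_
        filter_upwards with z₂
        rw [Real.norm_eq_abs, abs_mul, mul_comm]
        exact mul_le_mul_of_nonneg_right (hCg1 _) (abs_nonneg _)
      rw [integral_add3 hi1 hi2 hi3, integral_const_mul, integral_const_mul, integral_const_mul,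
        Gop_inner_ibp (C := Cg1) (C' := Cg2) hgd2 hgc2 hCg1 hCg2 z₁]
      rfl
    simp only [inner]
    -- step 3 : outer integrals
    have hJ1 : Integrable (fun z₁ => z₁ / (2 * s) * deriv f (s * z₁) * Gop A B g z₁)
        (gaussianReal 0 1) := by
      refine (integrable_abs_gauss.const_mul (1 / (2 * s) * (Cf1 * Cg0))).mono'
        (((continuous_id.div_const _).mul
          (hfc1.comp (continuous_const.mul continuous_id))).mul hGg_cont).aestronglyMeasurable ?_
      filter_upwards with z₁
      rw [Real.norm_eq_abs, abs_mul, abs_mul, abs_div,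
        abs_of_pos (by positivity : (0:ℝ) < 2 * s)]
      calc |z₁| / (2 * s) * |deriv f (s * z₁)| * |Gop A B g z₁|
          ≤ |z₁| / (2 * s) * Cf1 * Cg0 := by
            gcongr
            · exact hCf1 _
            · exact Gop_bound hCg0 z₁
        _ = 1 / (2 * s) * (Cf1 * Cg0) * |z₁| := by ring
    have hJ2 : Integrable (fun z₁ => -(t₁ * z₁) / (2 * t₂ * s) * f (s * z₁)
        * Gop A B (deriv g) z₁) (gaussianReal 0 1) := by
      refine (integrable_abs_gauss.const_mul (|t₁| / (2 * t₂ * s) * (Cf0 * Cg1))).mono'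
        ((((continuous_const.mul continuous_id).neg.div_const _).mul
          (hfc.comp (continuous_const.mul continuous_id))).mul hGg1_cont).aestronglyMeasurable ?_
      filter_upwards with z₁
      rw [Real.norm_eq_abs, abs_mul, abs_mul, abs_div, abs_neg, abs_mul,
        abs_of_pos (by positivity : (0:ℝ) < 2 * t₂ * s)]
      calc |t₁| * |z₁| / (2 * t₂ * s) * |f (s * z₁)| * |Gop A B (deriv g) z₁|
          ≤ |t₁| * |z₁| / (2 * t₂ * s) * Cf0 * Cg1 := by
            gcongr
            · exact hCf0 _
            · exact Gop_bound hCg1 z₁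
        _ = |t₁| / (2 * t₂ * s) * (Cf0 * Cg1) * |z₁| := by ring
    have hJ3 : Integrable (fun z₁ => t₁ ^ 2 / (2 * t₂ ^ 2 * B) * f (s * z₁)
        * (B * Gop A B (deriv (deriv g)) z₁)) (gaussianReal 0 1) := by
      refine intble_of_bdd ?_
        (C := |t₁ ^ 2 / (2 * t₂ ^ 2 * B)| * Cf0 * (|B| * Cg2)) fun z₁ => ?_
      · exact (((continuous_const.mul (hfc.comp (continuous_const.mul continuous_id))).mul
          (continuous_const.mul hGg2_cont))).aestronglyMeasurable
      · rw [abs_mul, abs_mul, abs_mul]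
        refine mul_le_mul (mul_le_mul le_rfl (hCf0 _) (abs_nonneg _) (abs_nonneg _)) ?_
          (mul_nonneg (abs_nonneg _) (abs_nonneg _)) (by positivity)
        exact mul_le_mul le_rfl (Gop_bound hCg2 z₁) (abs_nonneg _) (abs_nonneg _)
    rw [integral_add3 hJ1 hJ2 hJ3]
    -- evaluate the three outer integrals via integration by parts
    have hT1 : (∫ z₁, z₁ / (2 * s) * deriv f (s * z₁) * Gop A B g z₁ ∂(gaussianReal 0 1))
        = 1 / (2 * s) * (s * (∫ w, deriv (deriv f) (s * w) * Gop A B g w ∂(gaussianReal 0 1))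
          + A * (∫ w, deriv f (s * w) * Gop A B (deriv g) w ∂(gaussianReal 0 1))) := by
      rw [show (fun z₁ => z₁ / (2 * s) * deriv f (s * z₁) * Gop A B g z₁)
          = fun z₁ => 1 / (2 * s) * (z₁ * (deriv f (s * z₁) * Gop A B g z₁)) from
        funext fun z₁ => by ring]
      rw [integral_const_mul,
        outer_ibp hstpos.le hfd2 hfc2 hgd hgc1 hCf1 hCf2 hCg0 hCg1]
    have hT2 : (∫ z₁, -(t₁ * z₁) / (2 * t₂ * s) * f (s * z₁) * Gop A B (deriv g) z₁
          ∂(gaussianReal 0 1))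
        = -t₁ / (2 * t₂ * s) * (s * (∫ w, deriv f (s * w) * Gop A B (deriv g) w
            ∂(gaussianReal 0 1))
          + A * (∫ w, f (s * w) * Gop A B (deriv (deriv g)) w ∂(gaussianReal 0 1))) := by
      rw [show (fun z₁ => -(t₁ * z₁) / (2 * t₂ * s) * f (s * z₁) * Gop A B (deriv g) z₁)
          = fun z₁ => -t₁ / (2 * t₂ * s) * (z₁ * (f (s * z₁) * Gop A B (deriv g) z₁)) from
        funext fun z₁ => by ring]
      rw [integral_const_mul,
        outer_ibp hstpos.le hfd hfc1 hgd2 hgc2 hCf0 hCf1 hCg1 hCg2]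
    have hT3 : (∫ z₁, t₁ ^ 2 / (2 * t₂ ^ 2 * B) * f (s * z₁)
          * (B * Gop A B (deriv (deriv g)) z₁) ∂(gaussianReal 0 1))
        = t₁ ^ 2 / (2 * t₂ ^ 2 * B) * B
          * (∫ w, f (s * w) * Gop A B (deriv (deriv g)) w ∂(gaussianReal 0 1)) := by
      rw [show (fun z₁ => t₁ ^ 2 / (2 * t₂ ^ 2 * B) * f (s * z₁)
            * (B * Gop A B (deriv (deriv g)) z₁))
          = fun z₁ => t₁ ^ 2 / (2 * t₂ ^ 2 * B) * B
            * (f (s * z₁) * Gop A B (deriv (deriv g)) z₁) from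
        funext fun z₁ => by ring]
      rw [integral_const_mul]
    rw [hT1, hT2, hT3]
    -- right-hand side
    have hRHS : Egauss2 (fun x y => deriv (deriv f) x * g y) t₁ t₂ t₃
        = ∫ w, deriv (deriv f) (s * w) * Gop A B g w ∂(gaussianReal 0 1) := by
      rw [Egauss2]
      congr 1
      funext z₁
      rw [← hs_def, ← hB_def, ← hA_def, integral_const_mul]
      rfl
    rw [hRHS]
    -- final scalar computation
    generalize (∫ w, deriv (deriv f) (s * w) * Gop A B g w ∂(gaussianReal 0 1)) = Ea
    generalize (∫ w, deriv f (s * w) * Gop A B (deriv g) w ∂(gaussianReal 0 1)) = Eb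
    generalize (∫ w, f (s * w) * Gop A B (deriv (deriv g)) w ∂(gaussianReal 0 1)) = Ec
    rw [hA_def, ← hst2]
    have hs0 : s ≠ 0 := hstpos.ne'
    have hB0 : B ≠ 0 := hBpos.ne'
    field_simp
    ring
  rw [hfun_eq, ← hval_eq]
  exact hder
end

section
/- Let g(z) = E[tanh'(z+Y) tanh'(z−Y)] where Y is a centered Gaussian with fixed variance σ² > 0 and tanh' = 1 − tanh². Then g is an even function of z, g is decreasing on [0,∞) and increasing on (−∞,0]. -/
open MeasureTheory ProbabilityTheory

/-- `g(z) = E[tanh'(z+Y) tanh'(z−Y)]` where `Y` is a centered Gaussian of variance `v`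
and `tanh' = 1 − tanh²`. -/
noncomputable def gfun (v : NNReal) (z : ℝ) : ℝ :=
  ∫ y, (1 - Real.tanh (z + y) ^ 2) * (1 - Real.tanh (z - y) ^ 2) ∂(gaussianReal 0 v)

lemma one_sub_tanh_sq (u : ℝ) : 1 - Real.tanh u ^ 2 = 1 / Real.cosh u ^ 2 := by
  rw [Real.tanh_eq_sinh_div_cosh, div_pow, Real.sinh_sq]
  field_simp [(Real.cosh_pos u).ne']
  ring

lemma cosh_mul_cosh (z y : ℝ) :
    Real.cosh (z + y) * Real.cosh (z - y) = (Real.cosh (2 * z) + Real.cosh (2 * y)) / 2 := by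
  rw [Real.cosh_add, Real.cosh_sub, show (2 : ℝ) * z = z + z by ring,
    show (2 : ℝ) * y = y + y by ring, Real.cosh_add, Real.cosh_add]
  nlinarith [Real.sinh_sq z, Real.sinh_sq y]

lemma integrand_eq (z y : ℝ) :
    (1 - Real.tanh (z + y) ^ 2) * (1 - Real.tanh (z - y) ^ 2)
      = 4 / (Real.cosh (2 * z) + Real.cosh (2 * y)) ^ 2 := by
  have hpos : (0 : ℝ) < Real.cosh (2 * z) + Real.cosh (2 * y) := by
    have := Real.cosh_pos (2 * z); have := Real.cosh_pos (2 * y); linarith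
  rw [one_sub_tanh_sq, one_sub_tanh_sq, div_mul_div_comm, one_mul,
    ← mul_pow, cosh_mul_cosh, div_pow]
  rw [div_div_eq_mul_div, div_eq_div_iff (by positivity) (by positivity)]
  ring

lemma integrand_mono {a b : ℝ} (ha : 0 ≤ a) (hab : a ≤ b) (y : ℝ) :
    (1 - Real.tanh (b + y) ^ 2) * (1 - Real.tanh (b - y) ^ 2)
      ≤ (1 - Real.tanh (a + y) ^ 2) * (1 - Real.tanh (a - y) ^ 2) := by
  rw [integrand_eq, integrand_eq]
  have hca : Real.cosh (2 * a) ≤ Real.cosh (2 * b) := by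
    rw [Real.cosh_le_cosh, abs_of_nonneg (by linarith), abs_of_nonneg (by linarith)]
    linarith
  have h1 : (0 : ℝ) < Real.cosh (2 * a) + Real.cosh (2 * y) := by
    have := Real.cosh_pos (2 * a); have := Real.cosh_pos (2 * y); linarith
  have h2 : Real.cosh (2 * a) + Real.cosh (2 * y) ≤ Real.cosh (2 * b) + Real.cosh (2 * y) := by
    linarith
  gcongr 4 / ?_ ^ 2

lemma integrand_integrable (v : NNReal) (z : ℝ) :
    Integrable (fun y =>
      (1 - Real.tanh (z + y) ^ 2) * (1 - Real.tanh (z - y) ^ 2)) (gaussianReal 0 v) := by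
  refine (integrable_const (1 : ℝ)).mono' ?_ ?_
  · exact Continuous.aestronglyMeasurable <| by
      have : Continuous Real.tanh := by
        simp only [funext Real.tanh_eq_sinh_div_cosh]
        exact Real.continuous_sinh.div Real.continuous_cosh fun x => (Real.cosh_pos x).ne'
      fun_prop
  · refine Filter.Eventually.of_forall fun y => ?_
    rw [integrand_eq]
    have h1 : (1 : ℝ) ≤ Real.cosh (2 * z) := Real.one_le_cosh _
    have h2 : (1 : ℝ) ≤ Real.cosh (2 * y) := Real.one_le_cosh _
    rw [Real.norm_eq_abs, abs_of_nonneg (by positivity)]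
    rw [div_le_one (by positivity)]
    nlinarith

/-- `g` is even, decreasing on `[0,∞)` and increasing on `(−∞,0]`. -/
theorem stmt14 (v : NNReal) (hv : 0 < v) :
    (∀ z, gfun v (-z) = gfun v z) ∧
    AntitoneOn (gfun v) (Set.Ici 0) ∧
    MonotoneOn (gfun v) (Set.Iic 0) := by
  have heven : ∀ z, gfun v (-z) = gfun v z := by
    intro z
    unfold gfun
    refine integral_congr_ae (Filter.Eventually.of_forall fun y => ?_)
    simp only
    rw [show -z + y = -(z - y) by ring, show -z - y = -(z + y) by ring,
      Real.tanh_neg, Real.tanh_neg]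
    ring
  have hanti : AntitoneOn (gfun v) (Set.Ici 0) := by
    intro a ha b hb hab
    exact integral_mono (integrand_integrable v b) (integrand_integrable v a)
      (integrand_mono ha hab)
  refine ⟨heven, hanti, ?_⟩
  intro a ha b hb hab
  rw [← heven a, ← heven b]
  exact hanti (by simpa using hb) (by simpa using ha) (by linarith)
end
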